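/- arXiv:0810.2446 — 8 statements merged into one kernel-verified Lean document; each statement's English description precedes it below -/
import Mathlib

section
/- Let A⁺, A⁻ ∈ ℂ^{m×m} be matrices such that every eigenvalue λ of A⁺ satisfies Re λ > 0 and every eigenvalue μ of A⁻ satisfies Re μ < 0, and let B ∈ ℂ^{m×m}. Then the function t ↦ exp(−tA⁺) B exp(tA⁻) is integrable on [0,∞), and the matrix X = ∫₀^∞ exp(−tA⁺) B exp(tA⁻) dt solves the Sylvester equation A⁺X − XA⁻ = B. -/
open NormedSpace MeasureTheory  -- `exp`
open scoped Matrix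

attribute [local instance] Matrix.linftyOpNormedRing Matrix.linftyOpNormedAlgebra
  Matrix.linftyOpNormedSpace

namespace SylvesterAux

variable {m : ℕ}

/-- `M ↦ M *ᵥ v` as a continuous linear map. -/
noncomputable def mulVecL (v : Fin m → ℂ) : Matrix (Fin m) (Fin m) ℂ →L[ℂ] (Fin m → ℂ) :=
  LinearMap.toContinuousLinearMap
    { toFun := fun M => M *ᵥ v
      map_add' := fun M N => Matrix.add_mulVec M N v
      map_smul' := fun c M => Matrix.smul_mulVec c M v }

@[simp] lemma mulVecL_apply (v : Fin m → ℂ) (M : Matrix (Fin m) (Fin m) ℂ) :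
    mulVecL v M = M *ᵥ v := rfl

lemma exp_smul_mulVec (A : Matrix (Fin m) (Fin m) ℂ) (μ : ℂ) (v : Fin m → ℂ)
    (hv : ((A - μ • 1) ^ m) *ᵥ v = 0) (z : ℂ) :
    exp (z • A) *ᵥ v = Complex.exp (z * μ) •
      ∑ k ∈ Finset.range m, ((z ^ k / (k.factorial : ℂ)) • ((A - μ • 1) ^ k *ᵥ v)) := by
  set N : Matrix (Fin m) (Fin m) ℂ := A - μ • 1 with hN
  have hzero : ∀ n, m ≤ n → N ^ n *ᵥ v = 0 := by
    intro n hn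
    have h1 : N ^ n = N ^ (n - m) * N ^ m := by rw [← pow_add]; congr 1; omega
    rw [h1, ← Matrix.mulVec_mulVec, hv, Matrix.mulVec_zero]
  have hsplit : z • A = (z * μ) • (1 : Matrix (Fin m) (Fin m) ℂ) + z • N := by
    rw [hN]; module
  have hcomm : Commute ((z * μ) • (1 : Matrix (Fin m) (Fin m) ℂ)) (z • N) :=
    (Commute.one_left (z • N)).smul_left _
  have h1 : exp ((z * μ) • (1 : Matrix (Fin m) (Fin m) ℂ)) = Complex.exp (z * μ) • 1 := by
    have h1' := algebraMap_exp_comm (𝔸 := Matrix (Fin m) (Fin m) ℂ) (z * μ)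
    rw [Algebra.algebraMap_eq_smul_one, Algebra.algebraMap_eq_smul_one,
      ← Complex.exp_eq_exp_ℂ] at h1'
    exact h1'.symm
  have hexp : exp (z • A) = Complex.exp (z * μ) • exp (z • N) := by
    rw [hsplit, Matrix.exp_add_of_commute _ _ hcomm, h1, smul_mul_assoc, one_mul]
  rw [hexp, Matrix.smul_mulVec]
  congr 1
  have hsum : Summable fun n : ℕ => ((n.factorial : ℂ))⁻¹ • (z • N) ^ n :=
    expSeries_summable' (𝕂 := ℂ) (z • N)
  have htsum : exp (z • N) *ᵥ v = ∑' n : ℕ, (((n.factorial : ℂ))⁻¹ • (z • N) ^ n) *ᵥ v := by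
    rw [exp_eq_tsum ℂ]
    exact ((mulVecL v).map_tsum hsum)
  rw [htsum]
  rw [tsum_eq_sum (s := Finset.range m) ?_]
  · refine Finset.sum_congr rfl fun k _ => ?_
    rw [smul_pow, smul_smul, Matrix.smul_mulVec]
    congr 1
    rw [inv_mul_eq_div]
  · intro n hn
    have hz := hzero n (by simpa using hn)
    rw [smul_pow, smul_smul, Matrix.smul_mulVec, hz, smul_zero]

lemma mulVec_exp_bound_single (A : Matrix (Fin m) (Fin m) ℂ) {δ : ℝ} (hδ : 0 < δ)
    {μ : ℂ} (hμ : μ.re ≤ -δ) (w : Fin m → ℂ) (hw : ((A - μ • 1) ^ m) *ᵥ w = 0)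
    {t : ℝ} (ht : 0 ≤ t) :
    ‖exp ((t : ℂ) • A) *ᵥ w‖ ≤
      (∑ k ∈ Finset.range m, (2 / δ) ^ k * ‖(A - μ • 1) ^ k *ᵥ w‖) * Real.exp (-(δ / 2) * t) := by
  set S : ℝ := ∑ k ∈ Finset.range m, (2 / δ) ^ k * ‖(A - μ • 1) ^ k *ᵥ w‖ with hS
  have hS0 : 0 ≤ S := Finset.sum_nonneg fun k _ => by positivity
  have hkey : ∀ k : ℕ, t ^ k / (k.factorial : ℝ) ≤ (2 / δ) ^ k * Real.exp (δ / 2 * t) := by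
    intro k
    have h1 : (δ / 2 * t) ^ k / (k.factorial : ℝ) ≤ Real.exp (δ / 2 * t) :=
      Real.pow_div_factorial_le_exp _ (by positivity) k
    have h2 : t ^ k = (2 / δ) ^ k * (δ / 2 * t) ^ k := by
      rw [← mul_pow]; congr 1; field_simp
    rw [h2, mul_div_assoc]
    exact mul_le_mul_of_nonneg_left h1 (by positivity)
  rw [exp_smul_mulVec A μ w hw, norm_smul]
  have hre : ((t : ℂ) * μ).re = t * μ.re := by simp [Complex.mul_re]
  have hnormexp : ‖Complex.exp ((t : ℂ) * μ)‖ = Real.exp (t * μ.re) := by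
    rw [Complex.norm_exp, hre]
  have hsum : ‖∑ k ∈ Finset.range m, (((t : ℂ)) ^ k / (k.factorial : ℂ)) •
        ((A - μ • 1) ^ k *ᵥ w)‖ ≤ Real.exp (δ / 2 * t) * S := by
    refine (norm_sum_le _ _).trans ?_
    rw [hS, Finset.mul_sum]
    refine Finset.sum_le_sum fun k _ => ?_
    rw [norm_smul]
    have hcoef : ‖((t : ℂ)) ^ k / ((k.factorial : ℂ))‖ = t ^ k / (k.factorial : ℝ) := by
      rw [norm_div, norm_pow, Complex.norm_real, Real.norm_eq_abs, abs_of_nonneg ht,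
        Complex.norm_natCast]
    rw [hcoef]
    calc t ^ k / (k.factorial : ℝ) * ‖(A - μ • 1) ^ k *ᵥ w‖
        ≤ ((2 / δ) ^ k * Real.exp (δ / 2 * t)) * ‖(A - μ • 1) ^ k *ᵥ w‖ :=
          mul_le_mul_of_nonneg_right (hkey k) (norm_nonneg _)
      _ = Real.exp (δ / 2 * t) * ((2 / δ) ^ k * ‖(A - μ • 1) ^ k *ᵥ w‖) := by ring
  calc ‖Complex.exp ((t : ℂ) * μ)‖ * ‖∑ k ∈ Finset.range m, (((t : ℂ)) ^ k / (k.factorial : ℂ)) •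
          ((A - μ • 1) ^ k *ᵥ w)‖
      ≤ Real.exp (t * μ.re) * (Real.exp (δ / 2 * t) * S) := by
        rw [hnormexp]; exact mul_le_mul_of_nonneg_left hsum (Real.exp_nonneg _)
    _ ≤ Real.exp (-δ * t) * (Real.exp (δ / 2 * t) * S) := by
        have : t * μ.re ≤ -δ * t := by nlinarith
        exact mul_le_mul_of_nonneg_right (Real.exp_le_exp.mpr this)
          (mul_nonneg (Real.exp_nonneg _) hS0)
    _ = (Real.exp (-δ * t) * Real.exp (δ / 2 * t)) * S := by ring
    _ = S * Real.exp (-(δ / 2) * t) := by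
        rw [← Real.exp_add, mul_comm]
        congr 1
        ring

lemma mulVec_exp_bound (A : Matrix (Fin m) (Fin m) ℂ) {δ : ℝ} (hδ : 0 < δ)
    (hA : ∀ μ ∈ spectrum ℂ A, μ.re ≤ -δ) (v : Fin m → ℂ) :
    ∃ C : ℝ, ∀ t : ℝ, 0 ≤ t → ‖exp ((t : ℂ) • A) *ᵥ v‖ ≤ C * Real.exp (-(δ / 2) * t) := by
  classical
  set e := Matrix.toLinAlgEquiv' (n := Fin m) (R := ℂ)
  set f : Module.End ℂ (Fin m → ℂ) := e A with hf
  have htop : (⨆ μ : ℂ, f.maxGenEigenspace μ) = ⊤ :=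
    Module.End.iSup_maxGenEigenspace_eq_top f
  have hvmem : v ∈ ⨆ μ : ℂ, f.maxGenEigenspace μ := htop ▸ Submodule.mem_top
  obtain ⟨c, hc, hcsum⟩ := (Submodule.mem_iSup_iff_exists_finsupp _ v).mp hvmem
  -- each nonzero component is a generalized eigenvector whose eigenvalue is in the spectrum
  have hker : ∀ μ : ℂ, ((A - μ • 1) ^ m) *ᵥ (c μ) = 0 := by
    intro μ
    have h1 : c μ ∈ f.genEigenspace μ (m : ℕ) := by
      have := hc μ
      rw [Module.End.maxGenEigenspace_eq_genEigenspace_finrank, Module.finrank_fin_fun] at this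
      exact this
    rw [Module.End.mem_genEigenspace_nat, LinearMap.mem_ker] at h1
    have h2 : (f - μ • 1) ^ m = e ((A - μ • 1) ^ m) := by
      rw [map_pow, map_sub, _root_.map_smul, map_one]
    rw [h2] at h1
    exact h1
  have hre : ∀ μ : ℂ, μ ∈ c.support → μ.re ≤ -δ := by
    intro μ hμ
    have hne : c μ ≠ 0 := Finsupp.mem_support_iff.mp hμ
    have hgen : f.HasGenEigenvalue μ m := by
      have h1 : c μ ∈ f.genEigenspace μ (m : ℕ) := by
        have := hc μ
        rw [Module.End.maxGenEigenspace_eq_genEigenspace_finrank,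
          Module.finrank_fin_fun] at this
        exact this
      exact Submodule.ne_bot_iff _ |>.mpr ⟨c μ, h1, hne⟩
    have heig : f.HasEigenvalue μ := Module.End.hasEigenvalue_of_hasGenEigenvalue hgen
    have hsp : μ ∈ spectrum ℂ f := Module.End.hasEigenvalue_iff_mem_spectrum.mp heig
    rw [hf, AlgEquiv.spectrum_eq] at hsp
    exact hA μ hsp
  refine ⟨∑ μ ∈ c.support,
    ∑ k ∈ Finset.range m, (2 / δ) ^ k * ‖(A - μ • 1) ^ k *ᵥ (c μ)‖, fun t ht => ?_⟩
  have hvsum : v = ∑ μ ∈ c.support, c μ := by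
    rw [← hcsum]; rfl
  have hmv : exp ((t : ℂ) • A) *ᵥ v = ∑ μ ∈ c.support, exp ((t : ℂ) • A) *ᵥ (c μ) := by
    rw [hvsum, ← Matrix.mulVecLin_apply, map_sum]
    simp [Matrix.mulVecLin_apply]
  rw [hmv]
  refine (norm_sum_le _ _).trans ?_
  rw [Finset.sum_mul]
  exact Finset.sum_le_sum fun μ hμ => mulVec_exp_bound_single A hδ (hre μ hμ) (c μ) (hker μ) ht

lemma norm_le_sum_cols (M : Matrix (Fin m) (Fin m) ℂ) :
    ‖M‖ ≤ ∑ j, ‖M *ᵥ Pi.single j (1 : ℂ)‖ := by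
  have h : ‖M‖₊ ≤ ∑ j, ‖M *ᵥ Pi.single j (1 : ℂ)‖₊ := by
    rw [Matrix.linfty_opNNNorm_def]
    refine Finset.sup_le fun i _ => ?_
    refine Finset.sum_le_sum fun j _ => ?_
    rw [Matrix.mulVec_single_one]
    exact nnnorm_le_pi_nnnorm (Mᵀ j) i
  simpa [← coe_nnnorm, NNReal.coe_sum] using NNReal.coe_le_coe.mpr h

lemma exp_norm_bound (A : Matrix (Fin m) (Fin m) ℂ)
    (hA : ∀ μ ∈ spectrum ℂ A, μ.re < 0) :
    ∃ ε C : ℝ, 0 < ε ∧ 0 ≤ C ∧ ∀ t : ℝ, 0 ≤ t → ‖exp (t • A)‖ ≤ C * Real.exp (-ε * t) := by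
  classical
  obtain ⟨δ, hδ, hspec⟩ : ∃ δ : ℝ, 0 < δ ∧ ∀ μ ∈ spectrum ℂ A, μ.re ≤ -δ := by
    rcases (spectrum ℂ A).eq_empty_or_nonempty with h | h
    · exact ⟨1, one_pos, by simp [h]⟩
    · have hfin := Matrix.finite_spectrum A
      set s : Finset ℝ := hfin.toFinset.image Complex.re with hs
      obtain ⟨μ₀, hμ₀⟩ := h
      have hsne : s.Nonempty := ⟨μ₀.re, by simp [hs, Set.Finite.mem_toFinset]; exact ⟨μ₀, hμ₀, rfl⟩⟩
      obtain ⟨μ₁, hμ₁, hμ₁eq⟩ := Finset.mem_image.mp (s.max'_mem hsne)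
      rw [Set.Finite.mem_toFinset] at hμ₁
      refine ⟨-(s.max' hsne), ?_, ?_⟩
      · have := hA μ₁ hμ₁
        rw [hμ₁eq] at this
        linarith
      · intro μ hμ
        have : μ.re ∈ s := by
          rw [hs, Finset.mem_image]
          exact ⟨μ, Set.Finite.mem_toFinset _ |>.mpr hμ, rfl⟩
        have := Finset.le_max' s _ this
        linarith
  choose Cf hCf using fun j : Fin m =>
    mulVec_exp_bound A hδ hspec (Pi.single j (1 : ℂ))
  have hbound : ∀ t : ℝ, 0 ≤ t → ‖exp (t • A)‖ ≤ (∑ j, Cf j) * Real.exp (-(δ / 2) * t) := by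
    intro t ht
    have hts : t • A = (t : ℂ) • A := by
      rw [← algebraMap_smul ℂ t A, Complex.coe_algebraMap]
    calc ‖exp (t • A)‖ ≤ ∑ j, ‖exp (t • A) *ᵥ Pi.single j (1 : ℂ)‖ :=
          norm_le_sum_cols _
      _ ≤ ∑ j, Cf j * Real.exp (-(δ / 2) * t) := by
          refine Finset.sum_le_sum fun j _ => ?_
          rw [hts]
          exact hCf j t ht
      _ = (∑ j, Cf j) * Real.exp (-(δ / 2) * t) := (Finset.sum_mul _ _ _).symm
  refine ⟨δ / 2, ∑ j, Cf j, by positivity, ?_, hbound⟩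
  have h0 := (norm_nonneg (exp ((0 : ℝ) • A))).trans (hbound 0 le_rfl)
  simpa using h0

end SylvesterAux

/-- If every eigenvalue of `Ap` has positive real part and every eigenvalue of
`Am` has negative real part, then `t ↦ exp (-t Ap) * B * exp (t Am)` is integrable on `[0,∞)` and
`X = ∫₀^∞ exp (-t Ap) * B * exp (t Am) dt` solves the Sylvester equation `Ap X - X Am = B`. -/
theorem sylvester_solution_integral {m : ℕ} (Ap Am B : Matrix (Fin m) (Fin m) ℂ)
    (hAp : ∀ lam ∈ spectrum ℂ Ap, 0 < lam.re)
    (hAm : ∀ mu ∈ spectrum ℂ Am, mu.re < 0) :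
    @IntegrableOn _ _ _ _ (@SeminormedAddGroup.toContinuousENorm _ NormedAddGroup.toSeminormedAddGroup)
      (fun t : ℝ => exp ((-t) • Ap) * B * exp (t • Am)) (Set.Ici 0) volume ∧
    Ap * (∫ t in Set.Ici (0:ℝ), exp ((-t) • Ap) * B * exp (t • Am))
      - (∫ t in Set.Ici (0:ℝ), exp ((-t) • Ap) * B * exp (t • Am)) * Am = B := by
  classical
  letI : ContinuousENorm (Matrix (Fin m) (Fin m) ℂ) :=
    @SeminormedAddGroup.toContinuousENorm _ NormedAddGroup.toSeminormedAddGroup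
  haveI : TopologicalSpace.PseudoMetrizableSpace (Matrix (Fin m) (Fin m) ℂ) :=
    inferInstanceAs (TopologicalSpace.PseudoMetrizableSpace (Fin m → Fin m → ℂ))
  have hsmul : ∀ t : ℝ, (-t) • Ap = t • (-Ap) := fun t => by rw [neg_smul, ← smul_neg]
  simp only [hsmul]
  set F : ℝ → Matrix (Fin m) (Fin m) ℂ :=
    fun t => exp (t • (-Ap)) * B * exp (t • Am) with hF
  -- spectra
  have hApneg : ∀ μ ∈ spectrum ℂ (-Ap), μ.re < 0 := by
    intro μ hμ
    rw [← spectrum.neg_eq, Set.mem_neg] at hμ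
    have := hAp _ hμ
    rw [Complex.neg_re] at this
    linarith
  obtain ⟨ε₁, C₁, hε₁, hC₁0, hC₁⟩ := SylvesterAux.exp_norm_bound (-Ap) hApneg
  obtain ⟨ε₂, C₂, hε₂, hC₂0, hC₂⟩ := SylvesterAux.exp_norm_bound Am hAm
  set K : ℝ := C₁ * ‖B‖ * C₂ with hK
  have hK0 : 0 ≤ K := by positivity
  have hFbound : ∀ t : ℝ, 0 ≤ t → ‖F t‖ ≤ K * Real.exp (-ε₂ * t) := by
    intro t ht
    have h1 : ‖exp (t • (-Ap))‖ ≤ C₁ := by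
      refine (hC₁ t ht).trans ?_
      have : Real.exp (-ε₁ * t) ≤ 1 := Real.exp_le_one_iff.mpr (by nlinarith)
      nlinarith
    calc ‖F t‖ ≤ ‖exp (t • (-Ap)) * B‖ * ‖exp (t • Am)‖ := norm_mul_le _ _
      _ ≤ (‖exp (t • (-Ap))‖ * ‖B‖) * ‖exp (t • Am)‖ :=
          mul_le_mul_of_nonneg_right (norm_mul_le _ _) (norm_nonneg _)
      _ ≤ (C₁ * ‖B‖) * (C₂ * Real.exp (-ε₂ * t)) := by
          have h2 := hC₂ t ht
          have hb : 0 ≤ ‖exp (t • Am)‖ := norm_nonneg _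
          have hcb : 0 ≤ C₁ * ‖B‖ := by positivity
          exact mul_le_mul (mul_le_mul_of_nonneg_right h1 (norm_nonneg _)) h2 hb hcb
      _ = K * Real.exp (-ε₂ * t) := by rw [hK]; ring
  -- continuity
  have hgc : Continuous fun t : ℝ => exp (t • (-Ap)) :=
    exp_continuous.comp (continuous_id.smul continuous_const)
  have hhc : Continuous fun t : ℝ => exp (t • Am) :=
    exp_continuous.comp (continuous_id.smul continuous_const)
  have hFc : Continuous F := (hgc.mul continuous_const).mul hhc
  -- integrability
  have hFint : IntegrableOn F (Set.Ici 0) := by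
    have hgint : IntegrableOn (fun t : ℝ => K * Real.exp (-ε₂ * t)) (Set.Ici 0) :=
      (Iff.mpr integrableOn_Ici_iff_integrableOn_Ioi
        ((exp_neg_integrableOn_Ioi 0 hε₂).const_mul K))
    refine Integrable.mono' hgint hFc.aestronglyMeasurable ?_
    filter_upwards [ae_restrict_mem measurableSet_Ici] with t ht
    exact hFbound t ht
  refine ⟨hFint, ?_⟩
  have hFint' : IntegrableOn F (Set.Ioi 0) := hFint.mono_set Set.Ioi_subset_Ici_self
  -- limit at infinity
  have hlim : Filter.Tendsto F Filter.atTop (nhds 0) := by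
    refine squeeze_zero_norm' (a := fun t => K * Real.exp (-ε₂ * t)) ?_ ?_
    · filter_upwards [Filter.eventually_ge_atTop (0 : ℝ)] with t ht using hFbound t ht
    · have h1 : Filter.Tendsto (fun t : ℝ => ε₂ * t) Filter.atTop Filter.atTop :=
        Filter.Tendsto.const_mul_atTop hε₂ Filter.tendsto_id
      have h2 : Filter.Tendsto (fun t : ℝ => Real.exp (-(ε₂ * t))) Filter.atTop (nhds 0) :=
        Real.tendsto_exp_neg_atTop_nhds_zero.comp h1
      have h3 := h2.const_mul K
      rw [mul_zero] at h3
      refine h3.congr fun t => ?_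
      rw [neg_mul]
  -- derivative
  have hexpeq : (exp : Matrix (Fin m) (Fin m) ℂ → Matrix (Fin m) (Fin m) ℂ) = exp :=
    rfl
  have hderiv : ∀ t : ℝ, HasDerivAt F (-(Ap * F t - F t * Am)) t := by
    intro t
    have hg' : HasDerivAt (fun u : ℝ => exp (u • (-Ap))) ((-Ap) * exp (t • (-Ap))) t := by
      have := hasDerivAt_exp_smul_const' (𝕂 := ℝ) (-Ap) t
      exact this
      -- rewriting both occurrences
    have hh' : HasDerivAt (fun u : ℝ => exp (u • Am)) (exp (t • Am) * Am) t := by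
      have := hasDerivAt_exp_smul_const (𝕂 := ℝ) Am t
      exact this
    have h1 : HasDerivAt (fun u : ℝ => exp (u • (-Ap)) * B)
        (((-Ap) * exp (t • (-Ap))) * B) t := hg'.mul_const B
    have h2 := h1.mul hh'
    refine h2.congr_deriv ?_
    simp only [hF, neg_mul, neg_sub]
    noncomm_ring
  -- FTC
  have hψint : IntegrableOn (fun t => Ap * F t - F t * Am) (Set.Ioi 0) :=
    (hFint'.const_mul Ap).sub (hFint'.mul_const Am)
  have hkey : (∫ t in Set.Ioi (0:ℝ), -(Ap * F t - F t * Am)) = 0 - F 0 :=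
    MeasureTheory.integral_Ioi_of_hasDerivAt_of_tendsto'
      (fun t _ => hderiv t) hψint.neg hlim
  have hF0 : F 0 = B := by
    simp [hF, zero_smul, exp_zero]
  rw [integral_neg, hF0, zero_sub, neg_inj] at hkey
  -- split the integral
  have hmulL := ContinuousLinearMap.integral_comp_comm
    (ContinuousLinearMap.mul ℝ (Matrix (Fin m) (Fin m) ℂ) Ap) hFint'
  have hmulR := ContinuousLinearMap.integral_comp_comm
    ((ContinuousLinearMap.mul ℝ (Matrix (Fin m) (Fin m) ℂ)).flip Am) hFint'
  simp only [ContinuousLinearMap.mul_apply', ContinuousLinearMap.flip_apply] at hmulL hmulR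
  rw [MeasureTheory.integral_sub (hFint'.const_mul Ap) (hFint'.mul_const Am), hmulL, hmulR]
    at hkey
  rw [MeasureTheory.integral_Ici_eq_integral_Ioi]
  exact hkey
end

section
/- Let A : ℝ → ℂ^{m×m} be a family of matrices having a full asymptotic expansion with coefficients (A_k)_{k∈ℕ} as ρ → 0. Suppose the spectrum of A₀ is partitioned into finitely many disjoint groups 𝔖₁, …, 𝔖_d whose convex hulls are pairwise disjoint, and for each j let V_j ⊆ ℂ^m be the sum of the generalized eigenspaces of A₀ for the eigenvalues in 𝔖_j (so ℂ^m = V₁ ⊕ ⋯ ⊕ V_d). Then for every N ∈ ℕ there exist matrices M₀, …, M_{N−1} ∈ ℂ^{m×m} with M₀ invertible, and matrices Λ₀, …, Λ_{N−1} ∈ ℂ^{m×m} each of which maps V_j into V_j for every j, such that ‖A(ρ)·(Σ_{k=0}^{N−1} ρ^k M_k) − (Σ_{k=0}^{N−1} ρ^k M_k)·(Σ_{k=0}^{N−1} ρ^k Λ_k)‖ = O(|ρ|^N) as ρ → 0. -/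
open Filter Asymptotics

attribute [local instance] Matrix.linftyOpNormedRing Matrix.linftyOpNormedAlgebra
  Matrix.linftyOpNormedSpace

/-- A family `A : ℝ → ℂ^{m×m}` has a full asymptotic expansion with coefficients `Ak` as
`ρ → 0`: for every `N` there are `C, ε > 0` with
`‖A ρ - ∑_{k<N} ρ^k Ak k‖ ≤ C |ρ|^N` for all `|ρ| ≤ ε`. -/
def HasFullAsymptoticExpansion {m : ℕ} (A : ℝ → Matrix (Fin m) (Fin m) ℂ)
    (Ak : ℕ → Matrix (Fin m) (Fin m) ℂ) : Prop :=
  ∀ N : ℕ, ∃ C ε : ℝ, 0 < C ∧ 0 < ε ∧ ∀ ρ : ℝ, |ρ| ≤ ε →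
    ‖A ρ - ∑ k ∈ Finset.range N, (ρ : ℂ) ^ k • Ak k‖ ≤ C * |ρ| ^ N

/-- The sum of the generalized eigenspaces of `A₀` for the eigenvalues in the group `S`,
i.e. `∑_{λ ∈ S} ker (A₀ - λ I)^m`, as a subspace of `ℂ^m`. -/
noncomputable def groupSpace {m : ℕ} (A₀ : Matrix (Fin m) (Fin m) ℂ) (S : Set ℂ) :
    Submodule ℂ (Fin m → ℂ) :=
  ⨆ lam ∈ S, LinearMap.ker (Matrix.toLin' ((A₀ - lam • (1 : Matrix (Fin m) (Fin m) ℂ)) ^ m))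

section Auxiliary

open Module LinearMap Set
open scoped DirectSum

/-- Sylvester-type vanishing: an intertwiner between endomorphisms that are
`a`-nilpotent resp. `b`-nilpotent shifts with `a ≠ b` must vanish. -/
lemma sylvester_zero {M₁ M₂ : Type*} [AddCommGroup M₁] [Module ℂ M₁]
    [AddCommGroup M₂] [Module ℂ M₂] (h : Module.End ℂ M₁) (g : Module.End ℂ M₂)
    (a b : ℂ) (hab : a ≠ b) (hh : IsNilpotent (h - a • 1)) (hg : IsNilpotent (g - b • 1))
    (Y : M₁ →ₗ[ℂ] M₂) (hY : g ∘ₗ Y = Y ∘ₗ h) : Y = 0 := by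
  have step : (g - a • 1) ∘ₗ Y = Y ∘ₗ (h - a • 1) := by
    ext x
    simp only [LinearMap.comp_apply, LinearMap.sub_apply, LinearMap.smul_apply,
      Module.End.one_apply, map_sub, map_smul]
    rw [← LinearMap.comp_apply g Y, hY, LinearMap.comp_apply]
  have comm : ∀ n : ℕ, ((g - a • 1) ^ n) ∘ₗ Y = Y ∘ₗ ((h - a • 1) ^ n) := by
    intro n
    induction n with
    | zero => simp [Module.End.one_eq_id]
    | succ n ih =>
      rw [pow_succ, pow_succ, Module.End.mul_eq_comp, Module.End.mul_eq_comp,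
        LinearMap.comp_assoc, step, ← LinearMap.comp_assoc, ih, LinearMap.comp_assoc]
  obtain ⟨K, hK⟩ := hh
  have hzero : ((g - a • 1) ^ K) ∘ₗ Y = 0 := by
    rw [comm K, hK, LinearMap.comp_zero]
  have hinj : Function.Injective ⇑(g - a • (1 : Module.End ℂ M₂)) := by
    rw [← LinearMap.ker_eq_bot, eq_bot_iff]
    intro v hv
    rw [LinearMap.mem_ker] at hv
    have hgv : g v = a • v := by
      have := sub_eq_zero.mp (by simpa using hv)
      simpa using this
    obtain ⟨K', hK'⟩ := hg
    have hiter : ∀ n : ℕ, ((g - b • 1) ^ n) v = (a - b) ^ n • v := by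
      intro n
      induction n with
      | zero => simp
      | succ n ih =>
        rw [pow_succ', Module.End.mul_eq_comp, LinearMap.comp_apply, ih, map_smul]
        simp only [LinearMap.sub_apply, LinearMap.smul_apply, Module.End.one_apply, hgv]
        rw [← sub_smul, smul_smul, pow_succ']
        ring_nf
      -- (a-b)^(n+1) • v
    have h0 : (a - b) ^ K' • v = 0 := by rw [← hiter, hK']; rfl
    have : v = 0 := by
      rcases smul_eq_zero.mp h0 with h | h
      · exact absurd h (pow_ne_zero _ (sub_ne_zero.mpr hab))
      · exact h
    simp [this]
  have hinjK : Function.Injective ⇑((g - a • (1 : Module.End ℂ M₂)) ^ K) := by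
    rw [Module.End.coe_pow]
    exact hinj.iterate K
  ext x
  have : ((g - a • 1) ^ K) (Y x) = ((g - a • 1) ^ K) 0 := by
    have := congrArg (fun (T : M₁ →ₗ[ℂ] M₂) => T x) hzero
    simpa using this
  simpa using hinjK this

lemma ker_pow_eq_maxGen {m : ℕ} (A₀ : Matrix (Fin m) (Fin m) ℂ) (lam : ℂ) :
    LinearMap.ker (Matrix.toLin' ((A₀ - lam • (1 : Matrix (Fin m) (Fin m) ℂ)) ^ m)) =
      Module.End.maxGenEigenspace (Matrix.toLin' A₀) lam := by
  have h0 : ∀ B : Matrix (Fin m) (Fin m) ℂ, Matrix.toLin' B = Matrix.toLinAlgEquiv' B :=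
    fun B => LinearMap.ext fun v => by
      rw [Matrix.toLin'_apply, Matrix.toLinAlgEquiv'_apply]
  rw [h0, map_pow, map_sub, map_smul, map_one, h0 A₀,
    Module.End.maxGenEigenspace_eq_genEigenspace_finrank, Module.finrank_fin_fun,
    Module.End.genEigenspace_nat]


/-- Key algebraic step: any matrix `C` can be corrected by a commutator with `A₀`
into a block-diagonal matrix (one preserving all the subspaces `V j`). -/
lemma exists_commutator_correction {m d : ℕ} (A₀ : Matrix (Fin m) (Fin m) ℂ)
    (S : Fin d → Set ℂ) (V : Fin d → Submodule ℂ (Fin m → ℂ))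
    (hV : ∀ j, V j = ⨆ lam ∈ S j,
      Module.End.maxGenEigenspace (Matrix.toLin' A₀) lam) :
    (∀ j, ∀ x ∈ V j, A₀.mulVec x ∈ V j) ∧
    ∀ C : Matrix (Fin m) (Fin m) ℂ, ∃ X D : Matrix (Fin m) (Fin m) ℂ,
      (∀ j, ∀ x ∈ V j, D.mulVec x ∈ V j) ∧ A₀ * X - X * A₀ + C = D := by
  classical
  set f : Module.End ℂ (Fin m → ℂ) := Matrix.toLin' A₀ with hfdef
  set t : ℂ → Submodule ℂ (Fin m → ℂ) := fun lam => Module.End.maxGenEigenspace f lam with htdef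
  have hmt : ∀ μ, Set.MapsTo f (t μ) (t μ) := fun μ =>
    Module.End.mapsTo_maxGenEigenspace_of_comm (Commute.refl f) μ
  have hsupT : ⨆ μ, t μ = ⊤ := Module.End.iSup_maxGenEigenspace_eq_top f
  have hInd : iSupIndep t := f.independent_maxGenEigenspace
  have hInt : DirectSum.IsInternal t :=
    DirectSum.isInternal_submodule_of_iSupIndep_of_iSup_eq_top hInd hsupT
  set e : (⨁ lam : ℂ, ↥(t lam)) ≃ₗ[ℂ] (Fin m → ℂ) :=
    LinearEquiv.ofBijective (DirectSum.coeLinearMap t) hInt with hedef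
  set Pr : ∀ μ : ℂ, (Fin m → ℂ) →ₗ[ℂ] ↥(t μ) := fun μ =>
    (DirectSum.component ℂ ℂ (fun lam => ↥(t lam)) μ).comp e.symm.toLinearMap with hPrdef
  have hPr_apply : ∀ μ (x : Fin m → ℂ), Pr μ x = e.symm x μ := fun μ x => rfl
  have Pr_same : ∀ μ (x : Fin m → ℂ) (hx : x ∈ t μ), Pr μ x = ⟨x, hx⟩ := by
    intro μ x hx
    rw [hPr_apply]
    exact hInt.ofBijective_coeLinearMap_of_mem hx
  have Pr_ne : ∀ (μ ν : ℂ), ν ≠ μ → ∀ (x : Fin m → ℂ), x ∈ t ν → Pr μ x = 0 := by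
    intro μ ν hne x hx
    rw [hPr_apply]
    exact hInt.ofBijective_coeLinearMap_of_mem_ne hne hx
  -- membership via vanishing projections
  have mem_of_proj : ∀ (U : Set ℂ) (y : Fin m → ℂ),
      (∀ μ, μ ∉ U → Pr μ y = 0) → y ∈ ⨆ lam ∈ U, t lam := by
    intro U y hy
    have h1 : y = DirectSum.coeLinearMap t (e.symm y) := (e.apply_symm_apply y).symm
    rw [h1, ← DirectSum.sum_support_of (e.symm y), map_sum]
    apply Submodule.sum_mem
    intro μ _
    rw [DirectSum.coeLinearMap_of]
    by_cases hμU : μ ∈ U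
    · exact le_biSup t hμU (e.symm y μ).2
    · have : Pr μ y = 0 := hy μ hμU
      rw [hPr_apply] at this
      rw [this]
      simp
  -- restrictions of f
  set g : ∀ μ : ℂ, Module.End ℂ ↥(t μ) := fun μ => f.restrict (hmt μ) with hgdef
  have hrestr : ∀ (ν : ℂ) h', ((f - algebraMap ℂ (Module.End ℂ (Fin m → ℂ)) ν).restrict h')
      = g ν - ν • (1 : Module.End ℂ ↥(t ν)) := by
    intro ν h'
    ext z
    simp [LinearMap.restrict_apply, Module.algebraMap_end_apply, hgdef]
    rfl
  have hnil : ∀ μ : ℂ, IsNilpotent (g μ - μ • (1 : Module.End ℂ ↥(t μ))) := by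
    intro μ
    have := Module.End.isNilpotent_restrict_maxGenEigenspace_sub_algebraMap f μ
    convert this using 1
    exact (hrestr μ _).symm
  have comm_proj : ∀ (μ : ℂ) (x : Fin m → ℂ), Pr μ (f x) = (g μ) (Pr μ x) := by
    intro μ x
    have hxtop : x ∈ ⨆ lam, t lam := hsupT ▸ Submodule.mem_top
    refine Submodule.iSup_induction t (motive := fun x => Pr μ (f x) = (g μ) (Pr μ x)) hxtop ?_ ?_ ?_
    · intro ν y hy
      by_cases hν : ν = μ
      · subst hν
        rw [Pr_same ν y hy, Pr_same ν (f y) (hmt ν hy)]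
        apply Subtype.ext
        rfl
      · rw [Pr_ne μ ν hν y hy, Pr_ne μ ν hν (f y) (hmt ν hy), map_zero]
    · simp
    · intro y z hy hz
      simp [map_add, hy, hz]
  -- projections kill foreign group spaces
  have kill : ∀ (j : Fin d) (μ : ℂ), μ ∉ S j → ∀ x ∈ V j, Pr μ x = 0 := by
    intro j μ hμ x hx
    rw [hV j] at hx
    refine Submodule.iSup_induction (fun lam => ⨆ _ : lam ∈ S j, t lam)
      (motive := fun x => Pr μ x = 0) hx ?_ (map_zero _) ?_
    · intro lam y hy
      have hy' : y ∈ ⨆ _ : lam ∈ S j, t lam := hy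
      by_cases hlam : lam ∈ S j
      · rw [iSup_pos hlam] at hy'
        exact Pr_ne μ lam (fun hh => hμ (hh ▸ hlam)) y hy'
      · rw [iSup_neg hlam] at hy'
        rw [(Submodule.mem_bot ℂ).mp hy', map_zero]
    · intro y z hy hz
      rw [map_add, hy, hz, add_zero]
  have hfV : ∀ j, ∀ x ∈ V j, f x ∈ V j := by
    intro j x hx
    rw [hV j] at hx ⊢
    refine Submodule.iSup_induction (fun lam => ⨆ _ : lam ∈ S j, t lam)
      (motive := fun x => f x ∈ ⨆ lam ∈ S j, t lam) hx ?_ (by simp) ?_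
    · intro lam y hy
      have hy' : y ∈ ⨆ _ : lam ∈ S j, t lam := hy
      by_cases hlam : lam ∈ S j
      · rw [iSup_pos hlam] at hy'
        exact le_biSup t hlam (hmt lam hy')
      · rw [iSup_neg hlam] at hy'
        rw [(Submodule.mem_bot ℂ).mp hy', map_zero]
        exact Submodule.zero_mem _
    · intro y z hy hz
      rw [map_add]
      exact Submodule.add_mem _ hy hz
  have hA₀V : ∀ j, ∀ x ∈ V j, A₀.mulVec x ∈ V j := by
    intro j x hx
    have : A₀.mulVec x = f x := (Matrix.toLin'_apply A₀ x).symm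
    rw [this]
    exact hfV j x hx
  refine ⟨hA₀V, ?_⟩
  -- Step: preimage of block-diagonal matrices under the commutator is block diagonal
  have hKW : ∀ X : Matrix (Fin m) (Fin m) ℂ,
      (∀ j, ∀ x ∈ V j, (A₀ * X - X * A₀).mulVec x ∈ V j) →
      (∀ j, ∀ x ∈ V j, X.mulVec x ∈ V j) := by
    intro X hLX j x hx
    set χ : Module.End ℂ (Fin m → ℂ) := Matrix.toLin' X with hχdef
    have hXx : X.mulVec x = χ x := (Matrix.toLin'_apply X x).symm
    rw [hXx, hV j]
    apply mem_of_proj (S j)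
    intro μ hμ
    -- show Pr μ (χ x) = 0 for all x ∈ V j
    have hVx : x ∈ ⨆ lam ∈ S j, t lam := by rw [← hV j]; exact hx
    refine Submodule.iSup_induction (fun lam => ⨆ _ : lam ∈ S j, t lam)
      (motive := fun y => Pr μ (χ y) = 0) hVx ?_ (by simp) ?_
    · intro lam y hy
      have hy' : y ∈ ⨆ _ : lam ∈ S j, t lam := hy
      by_cases hlam : lam ∈ S j
      · rw [iSup_pos hlam] at hy'
        have hne : lam ≠ μ := fun hh => hμ (hh ▸ hlam)
        set Y : ↥(t lam) →ₗ[ℂ] ↥(t μ) := (Pr μ) ∘ₗ χ ∘ₗ (t lam).subtype with hYdef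
        have hint : (g μ) ∘ₗ Y = Y ∘ₗ (g lam) := by
          refine LinearMap.ext fun z => ?_
          show (g μ) (Y z) = Y ((g lam) z)
          have hz1 : f (χ (z : Fin m → ℂ)) =
              χ (f (z : Fin m → ℂ)) + (A₀ * X - X * A₀).mulVec (z : Fin m → ℂ) := by
            simp only [hfdef, hχdef, Matrix.toLin'_apply, Matrix.sub_mulVec,
              Matrix.mulVec_mulVec]
            abel
          have hzV : (z : Fin m → ℂ) ∈ V j := by
            rw [hV j]
            exact le_biSup t hlam z.2
          calc (g μ) (Y z) = (g μ) (Pr μ (χ (z : Fin m → ℂ))) := rfl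
            _ = Pr μ (f (χ (z : Fin m → ℂ))) := (comm_proj μ _).symm
            _ = Pr μ (χ (f (z : Fin m → ℂ)))
                + Pr μ ((A₀ * X - X * A₀).mulVec (z : Fin m → ℂ)) := by
                rw [hz1, map_add]
            _ = Pr μ (χ (f (z : Fin m → ℂ))) := by
                rw [kill j μ hμ _ (hLX j _ hzV), add_zero]
            _ = Y ((g lam) z) := by
                have : ((g lam) z : Fin m → ℂ) = f (z : Fin m → ℂ) :=
                  LinearMap.restrict_coe_apply f (hmt lam) z
                show Pr μ (χ (f (z : Fin m → ℂ))) = Pr μ (χ ((g lam) z : Fin m → ℂ))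
                rw [this]
        have hY0 : Y = 0 := sylvester_zero (g lam) (g μ) lam μ hne (hnil lam) (hnil μ) Y hint
        have hYy : Pr μ (χ y) = Y ⟨y, hy'⟩ := rfl
        rw [hYy, hY0]
        rfl
      · rw [iSup_neg hlam] at hy'
        rw [(Submodule.mem_bot ℂ).mp hy', map_zero, map_zero]
    · intro y z hy hz
      simp [map_add, hy, hz]
  -- the submodule of block-diagonal matrices
  set W : Submodule ℂ (Matrix (Fin m) (Fin m) ℂ) :=
    { carrier := {X | ∀ j, ∀ x ∈ V j, X.mulVec x ∈ V j}
      add_mem' := by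
        intro a b ha hb j x hx
        rw [Matrix.add_mulVec]
        exact Submodule.add_mem _ (ha j x hx) (hb j x hx)
      zero_mem' := by
        intro j x hx
        rw [Matrix.zero_mulVec]
        exact Submodule.zero_mem _
      smul_mem' := by
        intro c a ha j x hx
        rw [Matrix.smul_mulVec]
        exact Submodule.smul_mem _ _ (ha j x hx) } with hWdef
  have hmemW : ∀ X : Matrix (Fin m) (Fin m) ℂ,
      X ∈ W ↔ ∀ j, ∀ x ∈ V j, X.mulVec x ∈ V j := fun X => Iff.rfl
  set L : Matrix (Fin m) (Fin m) ℂ →ₗ[ℂ] Matrix (Fin m) (Fin m) ℂ :=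
    LinearMap.mulLeft ℂ A₀ - LinearMap.mulRight ℂ A₀ with hLdef
  have hL : ∀ X, L X = A₀ * X - X * A₀ := by
    intro X
    simp [hLdef, LinearMap.mulLeft_apply, LinearMap.mulRight_apply]
  have hker : LinearMap.ker (W.mkQ ∘ₗ L) = W := by
    rw [LinearMap.ker_comp, Submodule.ker_mkQ]
    apply le_antisymm
    · intro X hX
      rw [Submodule.mem_comap, hmemW, hL] at hX
      exact hKW X hX
    · intro X hX
      rw [Submodule.mem_comap, hmemW, hL]
      intro j x hx
      rw [Matrix.sub_mulVec, ← Matrix.mulVec_mulVec, ← Matrix.mulVec_mulVec]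
      exact Submodule.sub_mem _ (hA₀V j _ (hX j x hx)) (hX j _ (hA₀V j x hx))
  have hsurj : Function.Surjective (W.mkQ ∘ₗ L) := by
    rw [← LinearMap.range_eq_top]
    apply Submodule.eq_top_of_finrank_eq
    have h1 := LinearMap.finrank_range_add_finrank_ker (W.mkQ ∘ₗ L)
    have h2 := Submodule.finrank_quotient_add_finrank W
    rw [hker] at h1
    omega
  intro C
  obtain ⟨X, hX⟩ := hsurj (W.mkQ (-C))
  refine ⟨X, A₀ * X - X * A₀ + C, ?_, rfl⟩
  have hmem : L X + C ∈ W := by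
    rw [LinearMap.comp_apply] at hX
    have hX' : (Submodule.Quotient.mk (L X) : Matrix (Fin m) (Fin m) ℂ ⧸ W)
        = Submodule.Quotient.mk (-C) := hX
    have h2 : L X - (-C) ∈ W := (Submodule.Quotient.eq W).mp hX'
    simpa [sub_neg_eq_add] using h2
  rw [hL] at hmem
  exact hmem

end Auxiliary

/-- Theorem 2 of the paper. If `A(ρ)` has a full asymptotic expansion with
coefficients `Ak` as `ρ → 0` and the spectrum of `A₀ = Ak 0` is partitioned into finitely many
nonempty groups `S j` with pairwise disjoint convex hulls, then for every `N` there are matrices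
`M₀, …, M_{N-1}` with `M₀` invertible and matrices `Λ₀, …, Λ_{N-1}`, each block-diagonal in the
sense that it preserves every subspace `V j` of generalized eigenvectors of the group `S j`, such
that `A(ρ) ∑ ρ^k M_k - (∑ ρ^k M_k)(∑ ρ^k Λ_k) = O(|ρ|^N)` as `ρ → 0`. -/
theorem block_diagonalisation_finite_order {m d : ℕ}
    (A : ℝ → Matrix (Fin m) (Fin m) ℂ) (Ak : ℕ → Matrix (Fin m) (Fin m) ℂ)
    (hA : HasFullAsymptoticExpansion A Ak)
    (S : Fin d → Set ℂ)
    (hcover : spectrum ℂ (Ak 0) = ⋃ j, S j)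
    (hne : ∀ j, (S j).Nonempty)
    (hsep : Pairwise fun i j => Disjoint (convexHull ℝ (S i)) (convexHull ℝ (S j)))
    (V : Fin d → Submodule ℂ (Fin m → ℂ))
    (hV : ∀ j, V j = groupSpace (Ak 0) (S j))
    (N : ℕ) :
    ∃ M Λ : ℕ → Matrix (Fin m) (Fin m) ℂ,
      IsUnit (M 0) ∧
      (∀ k < N, ∀ j, ∀ x ∈ V j, (Λ k).mulVec x ∈ V j) ∧
      (fun ρ : ℝ =>
          A ρ * (∑ k ∈ Finset.range N, (ρ : ℂ) ^ k • M k)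
            - (∑ k ∈ Finset.range N, (ρ : ℂ) ^ k • M k)
              * (∑ k ∈ Finset.range N, (ρ : ℂ) ^ k • Λ k))
        =O[nhds 0] fun ρ : ℝ => |ρ| ^ N := by
  classical
  have hV' : ∀ j, V j = ⨆ lam ∈ S j,
      Module.End.maxGenEigenspace (Matrix.toLin' (Ak 0)) lam := by
    intro j
    rw [hV j, groupSpace]
    exact biSup_congr fun lam _ => ker_pow_eq_maxGen (Ak 0) lam
  obtain ⟨hA₀W, hcorr⟩ := exists_commutator_correction (Ak 0) S V hV'
  -- recursive construction of the first N coefficients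
  have hrec : ∀ n : ℕ, ∃ M Λ : ℕ → Matrix (Fin m) (Fin m) ℂ,
      M 0 = 1 ∧ Λ 0 = Ak 0 ∧
      (∀ k < n, ∀ j, ∀ x ∈ V j, (Λ k).mulVec x ∈ V j) ∧
      (∀ k < n, ∑ i ∈ Finset.range (k+1), Ak i * M (k - i)
        = ∑ i ∈ Finset.range (k+1), M i * Λ (k - i)) := by
    intro n
    induction n with
    | zero =>
      exact ⟨fun _ => 1, fun _ => Ak 0, rfl, rfl, fun k hk => absurd hk (Nat.not_lt_zero k),
        fun k hk => absurd hk (Nat.not_lt_zero k)⟩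
    | succ n ih =>
      obtain ⟨M, Λ, hM0, hΛ0, hΛW, hconv⟩ := ih
      rcases n with _ | p
      · refine ⟨fun _ => 1, fun _ => Ak 0, rfl, rfl, ?_, ?_⟩
        · intro k hk
          interval_cases k
          exact hA₀W
        · intro k hk
          interval_cases k
          simp
      · set C : Matrix (Fin m) (Fin m) ℂ :=
          (∑ i ∈ Finset.range (p+1), Ak (i+1) * M (p - i))
            - (∑ i ∈ Finset.range p, M (i+1) * Λ (p - i)) with hCdef
        obtain ⟨X, D, hDW, hD⟩ := hcorr C
        refine ⟨Function.update M (p+1) X, Function.update Λ (p+1) D, ?_, ?_, ?_, ?_⟩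
        · rw [Function.update_of_ne (Nat.succ_ne_zero p).symm]
          exact hM0
        · rw [Function.update_of_ne (Nat.succ_ne_zero p).symm]
          exact hΛ0
        · intro k hk
          by_cases hkp : k = p + 1
          · subst hkp
            rw [Function.update_self]
            exact hDW
          · rw [Function.update_of_ne hkp]
            exact hΛW k (by omega)
        · intro k hk
          by_cases hkp : k = p + 1
          · subst hkp
            rw [Finset.sum_range_succ' (fun i => Ak i * Function.update M (p+1) X (p + 1 - i)),
              Finset.sum_range_succ'
                (fun i => Function.update M (p+1) X i * Function.update Λ (p+1) D (p + 1 - i))]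
            have e1 : ∀ i ∈ Finset.range (p+1),
                Ak (i+1) * Function.update M (p+1) X (p + 1 - (i+1)) = Ak (i+1) * M (p - i) := by
              intro i hi
              rw [show p + 1 - (i+1) = p - i from by omega,
                Function.update_of_ne (by omega : p - i ≠ p + 1)]
            have e2 : ∀ i ∈ Finset.range (p+1),
                Function.update M (p+1) X (i+1) * Function.update Λ (p+1) D (p + 1 - (i+1))
                  = Function.update M (p+1) X (i+1) * Λ (p - i) := by
              intro i hi
              rw [show p + 1 - (i+1) = p - i from by omega,
                Function.update_of_ne (by omega : p - i ≠ p + 1)]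
            rw [Finset.sum_congr rfl e1, Finset.sum_congr rfl e2]
            rw [show p + 1 - 0 = p + 1 from rfl, Function.update_self, Function.update_self,
              Function.update_of_ne (Nat.succ_ne_zero p).symm, hM0, one_mul]
            rw [Finset.sum_range_succ
              (fun i => Function.update M (p+1) X (i+1) * Λ (p - i))]
            have e3 : ∀ i ∈ Finset.range p,
                Function.update M (p+1) X (i+1) * Λ (p - i) = M (i+1) * Λ (p - i) := by
              intro i hi
              rw [Function.update_of_ne (by simp at hi; omega : i + 1 ≠ p + 1)]
            rw [Finset.sum_congr rfl e3, Function.update_self,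
              show p - p = 0 from by omega, hΛ0, ← hD, hCdef]
            abel
          · have hkle : k < p + 1 := by omega
            have e1 : ∀ i ∈ Finset.range (k+1),
                Ak i * Function.update M (p+1) X (k - i) = Ak i * M (k - i) := by
              intro i hi
              rw [Function.update_of_ne (by omega : k - i ≠ p + 1)]
            have e2 : ∀ i ∈ Finset.range (k+1),
                Function.update M (p+1) X i * Function.update Λ (p+1) D (k - i)
                  = M i * Λ (k - i) := by
              intro i hi
              simp only [Finset.mem_range] at hi
              rw [Function.update_of_ne (by omega : i ≠ p + 1),
                Function.update_of_ne (by omega : k - i ≠ p + 1)]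
            rw [Finset.sum_congr rfl e1, Finset.sum_congr rfl e2]
            exact hconv k hkle
  obtain ⟨M, Λ, hM0, hΛ0, hΛW, hconv⟩ := hrec N
  refine ⟨M, Λ, hM0 ▸ isUnit_one, hΛW, ?_⟩
  -- asymptotics
  let P : ℝ → Matrix (Fin m) (Fin m) ℂ := fun ρ => ∑ k ∈ Finset.range N, (ρ : ℂ) ^ k • M k
  let Q : ℝ → Matrix (Fin m) (Fin m) ℂ := fun ρ => ∑ k ∈ Finset.range N, (ρ : ℂ) ^ k • Λ k
  let Atil : ℝ → Matrix (Fin m) (Fin m) ℂ := fun ρ => ∑ k ∈ Finset.range N, (ρ : ℂ) ^ k • Ak k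
  show (fun ρ : ℝ => A ρ * P ρ - P ρ * Q ρ) =O[nhds 0] fun ρ : ℝ => |ρ| ^ N
  have h1 : (fun ρ : ℝ => A ρ - Atil ρ) =O[nhds 0] fun ρ : ℝ => |ρ| ^ N := by
    obtain ⟨c, ε, hc, hε, hb⟩ := hA N
    rw [Asymptotics.isBigO_iff]
    refine ⟨c, ?_⟩
    have hev : ∀ᶠ ρ : ℝ in nhds 0, |ρ| ≤ ε :=
      ((continuous_abs.tendsto' (0:ℝ) 0 abs_zero).eventually_lt_const hε).mono
        fun _ h => h.le
    filter_upwards [hev] with ρ hρ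
    rw [Real.norm_eq_abs, abs_pow, abs_abs]
    exact hb ρ hρ
  have hPc : Continuous P := by
    apply continuous_finset_sum
    intro k _
    exact (Complex.continuous_ofReal.pow k).smul continuous_const
  have h2 : P =O[nhds 0] (fun _ : ℝ => (1:ℝ)) := (hPc.tendsto 0).isBigO_one ℝ
  have hT1 : (fun ρ : ℝ => (A ρ - Atil ρ) * P ρ) =O[nhds 0] fun ρ : ℝ => |ρ| ^ N := by
    have := h1.mul h2
    simpa using this
  -- the algebraic part
  set bad : Finset (ℕ × ℕ) :=
    (Finset.range N ×ˢ Finset.range N).filter (fun ij => ¬ ij.1 + ij.2 < N) with hbaddef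
  set G : ℕ × ℕ → Matrix (Fin m) (Fin m) ℂ :=
    fun ij => Ak ij.1 * M ij.2 - M ij.1 * Λ ij.2 with hGdef
  have hT2eq : ∀ ρ : ℝ, Atil ρ * P ρ - P ρ * Q ρ
      = ∑ ij ∈ bad, (ρ : ℂ) ^ (ij.1 + ij.2) • G ij := by
    intro ρ
    have e1 : Atil ρ * P ρ = ∑ ij ∈ Finset.range N ×ˢ Finset.range N,
        (ρ : ℂ) ^ (ij.1 + ij.2) • (Ak ij.1 * M ij.2) := by
      rw [Finset.sum_mul_sum, ← Finset.sum_product']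
      refine Finset.sum_congr rfl fun ij _ => ?_
      rw [pow_add, smul_mul_assoc, mul_smul_comm, smul_smul]
    have e2 : P ρ * Q ρ = ∑ ij ∈ Finset.range N ×ˢ Finset.range N,
        (ρ : ℂ) ^ (ij.1 + ij.2) • (M ij.1 * Λ ij.2) := by
      rw [Finset.sum_mul_sum, ← Finset.sum_product']
      refine Finset.sum_congr rfl fun ij _ => ?_
      rw [pow_add, smul_mul_assoc, mul_smul_comm, smul_smul]
    rw [e1, e2, ← Finset.sum_sub_distrib]
    have e3 : ∀ ij ∈ Finset.range N ×ˢ Finset.range N,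
        (ρ : ℂ) ^ (ij.1 + ij.2) • (Ak ij.1 * M ij.2) - (ρ : ℂ) ^ (ij.1 + ij.2) • (M ij.1 * Λ ij.2)
          = (ρ : ℂ) ^ (ij.1 + ij.2) • G ij := by
      intro ij _
      rw [hGdef, ← smul_sub]
    rw [Finset.sum_congr rfl e3,
      ← Finset.sum_filter_add_sum_filter_not (Finset.range N ×ˢ Finset.range N)
        (fun ij => ij.1 + ij.2 < N) (fun ij => (ρ : ℂ) ^ (ij.1 + ij.2) • G ij)]
    have hzero : ∑ ij ∈ (Finset.range N ×ˢ Finset.range N).filter (fun ij => ij.1 + ij.2 < N),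
        (ρ : ℂ) ^ (ij.1 + ij.2) • G ij = 0 := by
      have hset : (Finset.range N ×ˢ Finset.range N).filter (fun ij => ij.1 + ij.2 < N)
          = (Finset.range N).biUnion (fun k => Finset.HasAntidiagonal.antidiagonal k) := by
        ext ij
        simp only [Finset.mem_filter, Finset.mem_product, Finset.mem_range, Finset.mem_biUnion,
          Finset.HasAntidiagonal.mem_antidiagonal]
        constructor
        · rintro ⟨⟨h1, h2⟩, h3⟩
          exact ⟨ij.1 + ij.2, h3, rfl⟩
        · rintro ⟨k, hk, hk2⟩
          omega
      rw [hset, Finset.sum_biUnion ?hdisj]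
      case hdisj =>
        intro a _ b _ hab
        refine Finset.disjoint_left.mpr fun ij h1 h2 => hab ?_
        rw [← Finset.HasAntidiagonal.mem_antidiagonal.mp h1, ← Finset.HasAntidiagonal.mem_antidiagonal.mp h2]
      apply Finset.sum_eq_zero
      intro k hk
      have hsmul : ∑ ij ∈ Finset.HasAntidiagonal.antidiagonal k, (ρ : ℂ) ^ (ij.1 + ij.2) • G ij
          = (ρ : ℂ) ^ k • ∑ ij ∈ Finset.HasAntidiagonal.antidiagonal k, G ij := by
        rw [Finset.smul_sum]
        refine Finset.sum_congr rfl fun ij hij => ?_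
        rw [Finset.HasAntidiagonal.mem_antidiagonal.mp hij]
      rw [hsmul]
      have hzero2 : ∑ ij ∈ Finset.HasAntidiagonal.antidiagonal k, G ij = 0 := by
        rw [hGdef]
        rw [Finset.sum_sub_distrib,
          Finset.Nat.sum_antidiagonal_eq_sum_range_succ_mk,
          Finset.Nat.sum_antidiagonal_eq_sum_range_succ_mk]
        rw [hconv k (Finset.mem_range.mp hk)]
        exact sub_self _
      rw [hzero2, smul_zero]
    rw [hzero, zero_add]
  have hT2 : (fun ρ : ℝ => Atil ρ * P ρ - P ρ * Q ρ) =O[nhds 0] fun ρ : ℝ => |ρ| ^ N := by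
    have : (fun ρ : ℝ => Atil ρ * P ρ - P ρ * Q ρ)
        = fun ρ : ℝ => ∑ ij ∈ bad, (ρ : ℂ) ^ (ij.1 + ij.2) • G ij := funext hT2eq
    rw [this]
    apply Asymptotics.IsBigO.fun_sum
    intro ij hij
    have hN : N ≤ ij.1 + ij.2 := by
      rw [hbaddef, Finset.mem_filter] at hij
      omega
    rw [Asymptotics.isBigO_iff]
    refine ⟨‖G ij‖, ?_⟩
    have hev : ∀ᶠ ρ : ℝ in nhds 0, |ρ| ≤ 1 :=
      ((continuous_abs.tendsto' (0:ℝ) 0 abs_zero).eventually_lt_const one_pos).mono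
        fun _ h => h.le
    filter_upwards [hev] with ρ hρ
    rw [norm_smul, norm_pow, Complex.norm_real, Real.norm_eq_abs,
      Real.norm_eq_abs, abs_pow, abs_abs, mul_comm]
    exact mul_le_mul_of_nonneg_left (pow_le_pow_of_le_one (abs_nonneg ρ) hρ hN) (norm_nonneg _)
  have hsplit : (fun ρ : ℝ => A ρ * P ρ - P ρ * Q ρ)
      = fun ρ : ℝ => (A ρ - Atil ρ) * P ρ + (Atil ρ * P ρ - P ρ * Q ρ) := by
    funext ρ
    rw [sub_mul]
    abel
  rw [hsplit]
  exact hT1.add hT2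
end

section
/- Let Υ be a compact metric space, let A : Υ → ℂ^{m×m} be continuous, and let δ > 0 be such that r_spec(exp(A(v))) ≤ exp(−δ/2) for every v ∈ Υ. Then there exists T > 0 such that ‖exp(t·A(v))‖ ≤ (2·exp(−δ/2))^t for all v ∈ Υ and all real t ≥ T. -/
open NormedSpace  -- for `exp`

attribute [local instance] Matrix.linftyOpNormedRing Matrix.linftyOpNormedAlgebra
  Matrix.linftyOpNormedSpace

open Filter Topology
open scoped ENNReal NNReal

/-- For a continuous family `A(v)` of matrices over a compact metric space `Υ`
with `r_spec (exp (A v)) ≤ exp (-δ/2)` for all `v`, there is a uniform `T > 0` such that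
`‖exp (t • A v)‖ ≤ (2 exp (-δ/2)) ^ t` for all `v ∈ Υ` and all `t ≥ T`. -/
theorem norm_exp_uniform_bound_of_spectralRadius_le {Υ : Type*} [MetricSpace Υ]
    [CompactSpace Υ] {m : ℕ} (A : Υ → Matrix (Fin m) (Fin m) ℂ) (hA : Continuous A)
    (δ : ℝ) (hδ : 0 < δ)
    (hspec : ∀ v, spectralRadius ℂ (exp (A v)) ≤ ENNReal.ofReal (Real.exp (-δ / 2))) :
    ∃ T : ℝ, 0 < T ∧ ∀ v : Υ, ∀ t : ℝ, T ≤ t →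
      ‖exp (t • A v)‖ ≤ (2 * Real.exp (-δ / 2)) ^ t := by
  rcases isEmpty_or_nonempty Υ with hΥ | hΥ
  · exact ⟨1, one_pos, fun v => hΥ.elim v⟩
  set r : ℝ := Real.exp (-δ / 2) with hrdef
  have hr0 : 0 < r := Real.exp_pos _
  have hr1 : r < 1 := by
    rw [hrdef]
    have : (-δ / 2 : ℝ) < 0 := by linarith
    calc Real.exp (-δ/2) < Real.exp 0 := Real.exp_lt_exp.mpr this
    _ = 1 := Real.exp_zero
  set c : ℝ := (r + min 1 (2 * r)) / 2 with hcdef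
  have hmin1 : min 1 (2*r) ≤ 1 := min_le_left _ _
  have hmin2 : min 1 (2*r) ≤ 2*r := min_le_right _ _
  have hrmin : r < min 1 (2*r) := lt_min hr1 (by linarith)
  have hrc : r < c := by rw [hcdef]; linarith
  have hc1 : c < 1 := by rw [hcdef]; linarith
  have hc2r : c < 2 * r := by rw [hcdef]; linarith
  have hc0 : 0 < c := hr0.trans hrc
  -- Step 1: pointwise, from Gelfand's formula
  have step1 : ∀ v : Υ, ∃ n : ℕ, 1 ≤ n ∧ ‖exp ((n : ℝ) • A v)‖ < c ^ n := by
    intro v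
    have hgel := spectrum.pow_nnnorm_pow_one_div_tendsto_nhds_spectralRadius (exp (A v))
    have hlt : spectralRadius ℂ (exp (A v)) < ENNReal.ofReal c :=
      lt_of_le_of_lt (hspec v) ((ENNReal.ofReal_lt_ofReal_iff hc0).mpr hrc)
    obtain ⟨n, hn, hn1⟩ := ((hgel.eventually_lt_const hlt).and (eventually_ge_atTop 1)).exists
    refine ⟨n, hn1, ?_⟩
    have hnpos : (0 : ℝ) < n := by exact_mod_cast hn1
    have key : ((‖exp (A v) ^ n‖₊ : ℝ≥0∞)) < ENNReal.ofReal (c ^ (n : ℝ)) := by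
      have h2 : (((‖exp (A v) ^ n‖₊ : ℝ≥0∞)) ^ (1 / (n:ℝ) : ℝ)) ^ (n:ℝ)
          < (ENNReal.ofReal c) ^ (n:ℝ) := ENNReal.rpow_lt_rpow hn hnpos
      rwa [← ENNReal.rpow_mul, one_div, inv_mul_cancel₀ hnpos.ne', ENNReal.rpow_one,
        ENNReal.ofReal_rpow_of_pos hc0] at h2
    rw [← enorm_eq_nnnorm, ← ofReal_norm] at key
    have hnorm : ‖exp (A v) ^ n‖ < c ^ (n : ℝ) :=
      (ENNReal.ofReal_lt_ofReal_iff (Real.rpow_pos_of_pos hc0 _)).mp key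
    rw [Real.rpow_natCast] at hnorm
    rw [Nat.cast_smul_eq_nsmul ℝ n (A v)]
    rwa [← Matrix.exp_nsmul] at hnorm
  choose n hn1 hn2 using step1
  -- Step 2: finite subcover
  set U : Υ → Set Υ := fun v => {w | ‖exp ((n v : ℝ) • A w)‖ < c ^ (n v)} with hU
  have hUopen : ∀ v, IsOpen (U v) := by
    intro v
    have hcont : Continuous fun w => ‖exp ((n v : ℝ) • A w)‖ :=
      (exp_continuous.comp (hA.const_smul ((n v : ℝ)))).norm
    exact isOpen_lt hcont continuous_const
  obtain ⟨s, hs⟩ := isCompact_univ.elim_finite_subcover U hUopen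
    (fun w _ => Set.mem_iUnion.mpr ⟨w, hn2 w⟩)
  set N : ℕ := max 1 (s.sup n) with hN
  have hN1 : 1 ≤ N := le_max_left _ _
  -- Step 3: uniform bound on compact time interval
  have hfc : Continuous fun p : ℝ × Υ => ‖exp (p.1 • A p.2)‖ :=
    (exp_continuous.comp (continuous_fst.smul (hA.comp continuous_snd))).norm
  obtain ⟨p₀, -, hp₀⟩ := (isCompact_Icc.prod isCompact_univ).exists_isMaxOn
    (⟨(0, Classical.arbitrary Υ), by simp [Set.mem_prod]⟩ :
      (Set.Icc (0:ℝ) (N:ℝ) ×ˢ (Set.univ : Set Υ)).Nonempty) hfc.continuousOn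
  set C : ℝ := max 1 ‖exp (p₀.1 • A p₀.2)‖ with hC
  have hC1 : 1 ≤ C := le_max_left _ _
  have hC0 : 0 < C := lt_of_lt_of_le one_pos hC1
  have hCb : ∀ u : ℝ, 0 ≤ u → u ≤ N → ∀ w : Υ, ‖exp (u • A w)‖ ≤ C := by
    intro u hu1 hu2 w
    have hmem : ((u, w) : ℝ × Υ) ∈ Set.Icc (0:ℝ) (N:ℝ) ×ˢ (Set.univ : Set Υ) := by
      simp [Set.mem_prod, hu1, hu2]
    have h1 : ‖exp (u • A w)‖ ≤ ‖exp (p₀.1 • A p₀.2)‖ := isMaxOn_iff.mp hp₀ (u, w) hmem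
    exact le_trans h1 (le_max_right _ _)
  -- Step 4: key intermediate bound
  have key : ∀ w : Υ, ∀ t : ℝ, (N : ℝ) ≤ t → ‖exp (t • A w)‖ ≤ C * c ^ (t - N) := by
    intro w t ht
    obtain ⟨v, hvs, hvw⟩ := Set.mem_iUnion₂.mp (hs (Set.mem_univ w))
    set k : ℕ := n v with hk
    have hk1 : 1 ≤ k := hn1 v
    have hkN : k ≤ N := le_trans (Finset.le_sup hvs) (le_max_right _ _)
    have hk1' : (1:ℝ) ≤ (k:ℝ) := by exact_mod_cast hk1
    have hkN' : (k:ℝ) ≤ (N:ℝ) := by exact_mod_cast hkN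
    have hk0 : (0:ℝ) < k := by linarith
    have ht0 : (0:ℝ) ≤ t := le_trans (by positivity) ht
    set q : ℕ := ⌊t / k⌋₊ with hqdef
    have hq1 : 1 ≤ q := Nat.le_floor (by rw [le_div_iff₀ hk0]; push_cast; linarith)
    have hqk : (q:ℝ) * k ≤ t := by
      have := Nat.floor_le (div_nonneg ht0 hk0.le)
      calc (q:ℝ) * k ≤ (t / k) * k := by
            exact mul_le_mul_of_nonneg_right this hk0.le
        _ = t := div_mul_cancel₀ t hk0.ne'
    have hlt2 : t < ((q:ℝ) + 1) * k := by
      have := Nat.lt_floor_add_one (t / k)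
      calc t = (t / k) * k := (div_mul_cancel₀ t hk0.ne').symm
        _ < ((q:ℝ) + 1) * k := by exact mul_lt_mul_of_pos_right this hk0
    have hvw' : ‖exp ((k:ℝ) • A w)‖ < c ^ k := hvw
    have hdecomp : exp ((k:ℝ) • A w) ^ q * exp ((t - (q:ℝ) * k) • A w)
        = exp (t • A w) := by
      rw [← Matrix.exp_nsmul, ← Nat.cast_smul_eq_nsmul ℝ q, smul_smul,
        ← Matrix.exp_add_of_commute _ _ (((Commute.refl (A w)).smul_left _).smul_right _), ← add_smul]
      congr 1
      ring_nf
    have hnorm1 : ‖exp ((k:ℝ) • A w) ^ q‖ ≤ (c ^ k) ^ q :=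
      le_trans (norm_pow_le' _ hq1) (pow_le_pow_left₀ (norm_nonneg _) hvw'.le q)
    have hnorm2 : ‖exp ((t - (q:ℝ) * k) • A w)‖ ≤ C :=
      hCb _ (by linarith) (by nlinarith) w
    have h5 : ((c:ℝ) ^ k) ^ q ≤ c ^ (t - N) := by
      rw [← pow_mul, ← Real.rpow_natCast c (k * q)]
      apply Real.rpow_le_rpow_of_exponent_ge hc0 hc1.le
      push_cast
      nlinarith
    calc ‖exp (t • A w)‖
        = ‖exp ((k:ℝ) • A w) ^ q * exp ((t - (q:ℝ) * k) • A w)‖ := by rw [hdecomp]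
      _ ≤ ‖exp ((k:ℝ) • A w) ^ q‖ * ‖exp ((t - (q:ℝ) * k) • A w)‖ := norm_mul_le _ _
      _ ≤ ((c ^ k) ^ q) * C := by
          exact mul_le_mul hnorm1 hnorm2 (norm_nonneg _) (by positivity)
      _ ≤ c ^ (t - N) * C := by
          exact mul_le_mul_of_nonneg_right h5 hC0.le
      _ = C * c ^ (t - N) := mul_comm _ _
  -- Step 5: choose T
  set ρ : ℝ := (2 * r) / c with hρ
  have hρ1 : 1 < ρ := (one_lt_div hc0).mpr hc2r
  have htend : Tendsto (fun t : ℝ => ρ ^ t) atTop atTop := by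
    have hlog : 0 < Real.log ρ := Real.log_pos hρ1
    have h1 : Tendsto (fun t : ℝ => t * Real.log ρ) atTop atTop :=
      Tendsto.atTop_mul_const hlog tendsto_id
    have h2 : Tendsto (fun t : ℝ => Real.exp (t * Real.log ρ)) atTop atTop :=
      Real.tendsto_exp_atTop.comp h1
    refine h2.congr fun t => ?_
    rw [Real.rpow_def_of_pos (by positivity) t, mul_comm]
  obtain ⟨T, hT1, hT2⟩ :=
    ((htend.eventually_ge_atTop (C / c ^ (N:ℝ))).and (eventually_ge_atTop ((N:ℝ) ⊔ 1))).exists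
  refine ⟨T, lt_of_lt_of_le one_pos (le_trans (le_max_right _ _) hT2), fun v t ht => ?_⟩
  have htN : (N:ℝ) ≤ t := le_trans (le_trans (le_max_left _ _) hT2) ht
  have hmain := key v t htN
  have hρT : C / c ^ (N:ℝ) ≤ ρ ^ t :=
    le_trans hT1 (Real.rpow_le_rpow_of_exponent_le hρ1.le ht)
  calc ‖exp (t • A v)‖ ≤ C * c ^ (t - N) := hmain
    _ = (C / c ^ (N:ℝ)) * c ^ t := by
        rw [Real.rpow_sub hc0]; ring
    _ ≤ ρ ^ t * c ^ t := by
        exact mul_le_mul_of_nonneg_right hρT (Real.rpow_nonneg hc0.le t)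
    _ = (2 * r) ^ t := by
        rw [← Real.mul_rpow (by positivity) hc0.le, div_mul_cancel₀ _ hc0.ne']
end

section
/- Let Υ be a compact metric space, let S⁺, S⁻ : Υ → ℂ^{m×m} be continuous matrix families, and suppose there exist δ > 0 and continuous functions α : Υ → ℂ with |α(v)| = 1 and β : Υ → ℝ such that for every v ∈ Υ every eigenvalue λ of S⁺(v) satisfies Re(α(v)λ) > β(v) + δ/2 and every eigenvalue μ of S⁻(v) satisfies Re(α(v)μ) < β(v) − δ/2. Then there exists a constant C > 0 such that for every v ∈ Υ and every B ∈ ℂ^{m×m} there is a matrix X ∈ ℂ^{m×m} with S⁺(v)·X − X·S⁻(v) = B and ‖X‖ ≤ C‖B‖. -/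
attribute [local instance] Matrix.linftyOpNormedRing Matrix.linftyOpNormedAlgebra
  Matrix.linftyOpNormedSpace

private lemma sylv_spec_iff {m : ℕ} (A : Matrix (Fin m) (Fin m) ℂ) (lam : ℂ) :
    lam ∈ spectrum ℂ A ↔ A.charpoly.IsRoot lam := by
  rw [spectrum.mem_iff, Matrix.isUnit_iff_isUnit_det, isUnit_iff_ne_zero, not_not,
      Polynomial.IsRoot]
  have h : Polynomial.eval lam A.charpoly
      = ((algebraMap ℂ (Matrix (Fin m) (Fin m) ℂ)) lam - A).det := by
    rw [Matrix.charpoly, ← Polynomial.coe_evalRingHom, RingHom.map_det]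
    congr 1
    ext i j
    by_cases hij : i = j <;>
      simp [Matrix.charmatrix_apply, hij, Matrix.algebraMap_eq_diagonal, Matrix.diagonal_apply,
        Matrix.sub_apply]
  rw [h]

private lemma sylv_aeval_comm {m : ℕ} {A B X : Matrix (Fin m) (Fin m) ℂ}
    (h : A * X = X * B) (p : Polynomial ℂ) :
    Polynomial.aeval A p * X = X * Polynomial.aeval B p := by
  have hn : ∀ n : ℕ, A ^ n * X = X * B ^ n := by
    intro n
    induction n with
    | zero => simp
    | succ n ih =>
      rw [pow_succ, pow_succ, mul_assoc, h, ← mul_assoc, ih, mul_assoc]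
  induction p using Polynomial.induction_on' with
  | add p q hp hq => rw [map_add, map_add, add_mul, mul_add, hp, hq]
  | monomial n c =>
    rw [Polynomial.aeval_monomial, Polynomial.aeval_monomial, mul_assoc, hn n, ← mul_assoc,
      ← mul_assoc, Algebra.commutes c X]

private noncomputable instance sylvCLMNormedRing (m : ℕ) :
    NormedRing (Matrix (Fin m) (Fin m) ℂ →L[ℂ] Matrix (Fin m) (Fin m) ℂ) :=
  ContinuousLinearMap.toNormedRing

private instance sylvCLMGeom (m : ℕ) :
    HasSummableGeomSeries (Matrix (Fin m) (Fin m) ℂ →L[ℂ] Matrix (Fin m) (Fin m) ℂ) := by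
  letI : NormedAddCommGroup (Matrix (Fin m) (Fin m) ℂ →L[ℂ] Matrix (Fin m) (Fin m) ℂ) :=
    ContinuousLinearMap.toNormedAddCommGroup
  letI : NormedSpace ℂ (Matrix (Fin m) (Fin m) ℂ →L[ℂ] Matrix (Fin m) (Fin m) ℂ) :=
    ContinuousLinearMap.toNormedSpace
  haveI : CompleteSpace (Matrix (Fin m) (Fin m) ℂ →L[ℂ] Matrix (Fin m) (Fin m) ℂ) :=
    FiniteDimensional.complete ℂ _
  exact @instHasSummableGeomSeriesOfCompleteSpace _ (sylvCLMNormedRing m) this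

/-- uniform solvability of the Sylvester equation, Corollary 3 of the paper.
If the spectra of two continuous families `Sp v`, `Sm v` over a compact metric space are
uniformly separated by a closed strip of width `δ` around the line `{ζ : Re (α v · ζ) = β v}`
(with `α, β` continuous, `|α v| = 1`), then there is a uniform constant `C > 0` such that for
every `v` and every right-hand side `B` the Sylvester equation `Sp v · X - X · Sm v = B` has a
solution `X` with `‖X‖ ≤ C ‖B‖`. -/
theorem sylvester_uniform_bound {Υ : Type*} [MetricSpace Υ] [CompactSpace Υ] {m : ℕ}
    (Sp Sm : Υ → Matrix (Fin m) (Fin m) ℂ) (hSp : Continuous Sp) (hSm : Continuous Sm)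
    (δ : ℝ) (hδ : 0 < δ) (α : Υ → ℂ) (β : Υ → ℝ) (hα : Continuous α) (hβ : Continuous β)
    (hα1 : ∀ v, ‖α v‖ = 1)
    (hspecp : ∀ v, ∀ lam ∈ spectrum ℂ (Sp v), β v + δ / 2 < (α v * lam).re)
    (hspecm : ∀ v, ∀ mu ∈ spectrum ℂ (Sm v), (α v * mu).re < β v - δ / 2) :
    ∃ C : ℝ, 0 < C ∧ ∀ v : Υ, ∀ B : Matrix (Fin m) (Fin m) ℂ,
      ∃ X : Matrix (Fin m) (Fin m) ℂ, Sp v * X - X * Sm v = B ∧ ‖X‖ ≤ C * ‖B‖ := by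
  rcases Nat.eq_zero_or_pos m with hm | hm
  · subst hm
    refine ⟨1, one_pos, fun v B => ⟨0, Subsingleton.elim _ _, by simp [norm_nonneg]⟩⟩
  -- the Sylvester operator
  let M := Matrix (Fin m) (Fin m) ℂ
  let T : Υ → (M →L[ℂ] M) := fun v =>
    ContinuousLinearMap.mul ℂ M (Sp v) - (ContinuousLinearMap.mul ℂ M).flip (Sm v)
  have hTapp : ∀ v (X : M), T v X = Sp v * X - X * Sm v := fun v X => rfl
  have hTcont : Continuous T :=
    ((ContinuousLinearMap.mul ℂ M).continuous.comp hSp).sub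
      ((ContinuousLinearMap.mul ℂ M).flip.continuous.comp hSm)
  -- disjoint spectra give invertibility of q(Sp v) where q = charpoly (Sm v)
  have hq : ∀ v, IsUnit (Polynomial.aeval (Sp v) (Sm v).charpoly) := by
    intro v
    rw [← spectrum.zero_notMem_iff ℂ]
    have hdeg : 0 < (Sm v).charpoly.degree := by
      rw [Matrix.charpoly_degree_eq_dim, Fintype.card_fin]
      exact_mod_cast hm
    rw [spectrum.map_polynomial_aeval_of_degree_pos (Sp v) (Sm v).charpoly hdeg]
    rintro ⟨lam, hlam, heval⟩
    have hmem : lam ∈ spectrum ℂ (Sm v) := (sylv_spec_iff (Sm v) lam).mpr heval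
    have h1 := hspecp v lam hlam
    have h2 := hspecm v lam hmem
    linarith
  -- injectivity hence bijectivity of T v
  have hinj : ∀ v, Function.Injective (T v) := by
    intro v
    rw [injective_iff_map_eq_zero]
    intro X hX
    rw [hTapp, sub_eq_zero] at hX
    have h0 : Polynomial.aeval (Sp v) (Sm v).charpoly * X = 0 := by
      rw [sylv_aeval_comm hX, Matrix.aeval_self_charpoly, mul_zero]
    exact (hq v).mul_left_cancel (by rw [h0, mul_zero])
  have hbij : ∀ v, Function.Bijective (T v) := fun v =>
    ⟨hinj v, (LinearMap.injective_iff_surjective (f := (T v : M →ₗ[ℂ] M))).mp (hinj v)⟩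
  -- units
  let e : ∀ v, M ≃L[ℂ] M := fun v =>
    (LinearEquiv.ofBijective (T v : M →ₗ[ℂ] M) (hbij v)).toContinuousLinearEquiv
  have heT : ∀ v, ((e v).toUnit : M →L[ℂ] M) = T v := fun v => by ext x; rfl
  -- the inverse norm is continuous, bound it on the compact space
  have hfc : Continuous fun v => ‖Ring.inverse (T v)‖ := by
    apply continuous_norm.comp
    rw [continuous_iff_continuousAt]
    intro v
    exact ((heT v ▸ NormedRing.inverse_continuousAt (e v).toUnit :
      ContinuousAt Ring.inverse (T v)).comp hTcont.continuousAt)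
  obtain ⟨C0, hC0⟩ := isCompact_univ.exists_bound_of_continuousOn hfc.continuousOn
  refine ⟨max C0 0 + 1, by positivity, fun v B => ?_⟩
  refine ⟨Ring.inverse (T v) B, ?_, ?_⟩
  · have h1 : T v * Ring.inverse (T v) = 1 :=
      Ring.mul_inverse_cancel _ (heT v ▸ (e v).toUnit.isUnit)
    have := congrArg (fun f : M →L[ℂ] M => f B) h1
    simpa [hTapp, ContinuousLinearMap.mul_apply] using this
  · calc ‖Ring.inverse (T v) B‖ ≤ ‖Ring.inverse (T v)‖ * ‖B‖ :=
          (Ring.inverse (T v)).le_opNorm B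
    _ ≤ (max C0 0 + 1) * ‖B‖ := by
        apply mul_le_mul_of_nonneg_right _ (norm_nonneg B)
        have := hC0 v (Set.mem_univ v)
        have h2 : ‖Ring.inverse (T v)‖ ≤ ‖‖Ring.inverse (T v)‖‖ := le_abs_self _
        calc ‖Ring.inverse (T v)‖ ≤ C0 := le_trans h2 this
        _ ≤ max C0 0 + 1 := by linarith [le_max_left C0 0]
end

section
/- Let Υ be a compact metric space and let d ≥ 1 with block sizes m₁, …, m_d summing to m. Let A : ℝ × Υ → ℂ^{m×m} be a family with continuous, uniformly bounded coefficient functions A_k : Υ → ℂ^{m×m} (k ∈ ℕ) such that for every N ∈ ℕ there are C, ε > 0 with ‖A(ρ,v) − Σ_{k=0}^{N−1} ρ^k A_k(v)‖ ≤ C|ρ|^N for all v ∈ Υ and |ρ| ≤ ε (uniform full asymptotic expansion). Suppose A₀(v) is block-diagonal, A₀(v) = bdiag(S₁(v), …, S_d(v)) with continuous families S_j : Υ → ℂ^{m_j×m_j}, and that there is δ > 0 such that for every pair i ≠ j there exist continuous α_{ij} : Υ → ℂ with |α_{ij}(v)| = 1 and β_{ij} : Υ → ℝ with Re(α_{ij}(v)λ)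 > β_{ij}(v) + δ/2 for all eigenvalues λ of S_i(v) and Re(α_{ij}(v)μ) < β_{ij}(v) − δ/2 for all eigenvalues μ of S_j(v). Then for every N ∈ ℕ there exist uniformly bounded functions M₀, …, M_{N−1} : Υ → ℂ^{m×m} with M₀(v) = I, and uniformly bounded functions Λ₀, …, Λ_{N−1} : Υ → ℂ^{m×m} each of which is block-diagonal with respect to the blocks m₁, …, m_d, together with constants C', ε' > 0 such that ‖A(ρ,v)·(Σ_{k=0}^{N−1} ρ^k M_k(v)) − (Σ_{k=0}^{N−1} ρ^k M_k(v))·(Σ_{k=0}^{N−1} ρ^k Λ_k(v))‖ ≤ C'|ρ|^N for all v ∈ Υ and |ρ| ≤ ε'. -/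
attribute [local instance] Matrix.linftyOpNormedRing Matrix.linftyOpNormedAlgebra
  Matrix.linftyOpNormedSpace

open Polynomial

namespace UBDAux

/-- Sylvester commutation for powers. -/
lemma pow_mul_comm'' {m n : ℕ} (P : Matrix (Fin m) (Fin m) ℂ) (Q : Matrix (Fin n) (Fin n) ℂ)
    (X : Matrix (Fin m) (Fin n) ℂ) (hX : P * X = X * Q) (k : ℕ) : P ^ k * X = X * Q ^ k := by
  induction k with
  | zero => simp
  | succ k ih =>
    rw [pow_succ, pow_succ, Matrix.mul_assoc, hX, ← Matrix.mul_assoc, ih, Matrix.mul_assoc]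

lemma aeval_mul_comm' {m n : ℕ} (P : Matrix (Fin m) (Fin m) ℂ) (Q : Matrix (Fin n) (Fin n) ℂ)
    (X : Matrix (Fin m) (Fin n) ℂ) (hX : P * X = X * Q) (p : ℂ[X]) :
    (aeval P p) * X = X * (aeval Q p) := by
  induction p using Polynomial.induction_on' with
  | add f g hf hg => rw [map_add, map_add, Matrix.add_mul, Matrix.mul_add, hf, hg]
  | monomial k c =>
    rw [aeval_monomial, aeval_monomial, ← Algebra.smul_def, ← Algebra.smul_def,
      Matrix.smul_mul, Matrix.mul_smul, pow_mul_comm'' P Q X hX k]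

lemma root_charpoly_mem_spectrum' {n : ℕ} (M : Matrix (Fin n) (Fin n) ℂ) (μ : ℂ)
    (h : M.charpoly.eval μ = 0) : μ ∈ spectrum ℂ M := by
  rw [Matrix.charpoly, eval_det, Matrix.matPolyEquiv_charmatrix] at h
  simp only [eval_sub, eval_X, eval_C] at h
  rw [spectrum.mem_iff]
  intro hu
  rw [Matrix.isUnit_iff_isUnit_det] at hu
  rw [show (Matrix.scalar (Fin n) μ : Matrix (Fin n) (Fin n) ℂ)
      = Matrix.diagonal (fun _ => μ) from rfl] at h
  rw [Matrix.algebraMap_eq_diagonal,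
    show (algebraMap ℂ (Fin n → ℂ)) μ = (fun _ : Fin n => μ) from rfl] at hu
  rw [h] at hu
  exact hu.ne_zero rfl

lemma sylvester_unique {m n : ℕ} (P : Matrix (Fin m) (Fin m) ℂ) (Q : Matrix (Fin n) (Fin n) ℂ)
    (hdisj : ∀ μ, μ ∈ spectrum ℂ P → μ ∉ spectrum ℂ Q)
    (X : Matrix (Fin m) (Fin n) ℂ) (hX : P * X = X * Q) : X = 0 := by
  rcases Nat.eq_zero_or_pos n with hn | hn
  · subst hn; ext i j; exact j.elim0
  set p := Q.charpoly with hp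
  have hdeg : 0 < p.degree := by
    rw [← Polynomial.natDegree_pos_iff_degree_pos, hp, Matrix.charpoly_natDegree_eq_dim]
    simpa using hn
  have hu : IsUnit (aeval P p) := by
    rw [← spectrum.zero_notMem_iff ℂ]
    intro h0
    rw [spectrum.map_polynomial_aeval_of_degree_pos P p hdeg] at h0
    obtain ⟨μ, hμ, hev⟩ := h0
    exact hdisj μ hμ (root_charpoly_mem_spectrum' Q μ hev)
  have h0 : (aeval P p) * X = 0 := by
    rw [aeval_mul_comm' P Q X hX p, hp, Matrix.aeval_self_charpoly, Matrix.mul_zero]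
  calc X = 1 * X := (Matrix.one_mul X).symm
    _ = (((hu.unit⁻¹ : (Matrix (Fin m) (Fin m) ℂ)ˣ) : Matrix (Fin m) (Fin m) ℂ) * (aeval P p)) * X := by rw [IsUnit.val_inv_mul]
    _ = ((hu.unit⁻¹ : (Matrix (Fin m) (Fin m) ℂ)ˣ) : Matrix (Fin m) (Fin m) ℂ) * ((aeval P p) * X) := Matrix.mul_assoc _ _ _
    _ = 0 := by rw [h0, Matrix.mul_zero]

variable {d : ℕ} {mk : Fin d → ℕ}

abbrev MatB (mk : Fin d → ℕ) := Matrix ((j : Fin d) × Fin (mk j)) ((j : Fin d) × Fin (mk j)) ℂ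

/-- Off-block-diagonal part. -/
def offM (X : MatB mk) : MatB mk := fun p q => if p.1 = q.1 then 0 else X p q

/-- Block-diagonal part. -/
def diagM (X : MatB mk) : MatB mk := fun p q => if p.1 = q.1 then X p q else 0

lemma offM_add_diagM (X : MatB mk) : offM X + diagM X = X := by
  funext p q
  by_cases h : p.1 = q.1 <;> simp [offM, diagM, h, Matrix.add_apply]

lemma offM_add (X Y : MatB mk) : offM (X + Y) = offM X + offM Y := by
  funext p q
  by_cases h : p.1 = q.1 <;> simp [offM, h, Matrix.add_apply]

lemma offM_smul (c : ℂ) (X : MatB mk) : offM (c • X) = c • offM X := by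
  funext p q
  by_cases h : p.1 = q.1 <;> simp [offM, h, Matrix.smul_apply]

lemma diagM_add (X Y : MatB mk) : diagM (X + Y) = diagM X + diagM Y := by
  funext p q
  by_cases h : p.1 = q.1 <;> simp [diagM, h, Matrix.add_apply]

lemma diagM_neg (X : MatB mk) : diagM (-X) = -diagM X := by
  funext p q
  by_cases h : p.1 = q.1 <;> simp [diagM, h]

lemma diagM_zero : diagM (0 : MatB mk) = 0 := by
  funext p q
  by_cases h : p.1 = q.1 <;> simp [diagM, h]

lemma diagM_offM (X : MatB mk) : diagM (offM X) = 0 := by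
  funext p q
  by_cases h : p.1 = q.1 <;> simp [diagM, offM, h]

lemma diagM_diagM (X : MatB mk) : diagM (diagM X) = diagM X := by
  funext p q
  by_cases h : p.1 = q.1 <;> simp [diagM, h]


/-- Extraction of the `(i,j)` block. -/
def blk (X : MatB mk) (i j : Fin d) : Matrix (Fin (mk i)) (Fin (mk j)) ℂ :=
  fun a b => X ⟨i, a⟩ ⟨j, b⟩

lemma bd_mul_apply (Sv : ∀ j, Matrix (Fin (mk j)) (Fin (mk j)) ℂ) (X : MatB mk)
    (i j : Fin d) (a : Fin (mk i)) (b : Fin (mk j)) :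
    (Matrix.blockDiagonal' Sv * X) ⟨i, a⟩ ⟨j, b⟩ = (Sv i * blk X i j) a b := by
  rw [Matrix.mul_apply, ← Finset.univ_sigma_univ, Finset.sum_sigma]
  rw [Finset.sum_eq_single i]
  · rw [Matrix.mul_apply]
    apply Finset.sum_congr rfl
    intro c _
    rw [Matrix.blockDiagonal'_apply_eq]
    rfl
  · intro l _ hl
    apply Finset.sum_eq_zero
    intro c _
    rw [Matrix.blockDiagonal'_apply_ne _ _ _ (Ne.symm hl), zero_mul]
  · intro h
    exact absurd (Finset.mem_univ i) h

lemma mul_bd_apply (Sv : ∀ j, Matrix (Fin (mk j)) (Fin (mk j)) ℂ) (X : MatB mk)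
    (i j : Fin d) (a : Fin (mk i)) (b : Fin (mk j)) :
    (X * Matrix.blockDiagonal' Sv) ⟨i, a⟩ ⟨j, b⟩ = (blk X i j * Sv j) a b := by
  rw [Matrix.mul_apply, ← Finset.univ_sigma_univ, Finset.sum_sigma]
  rw [Finset.sum_eq_single j]
  · rw [Matrix.mul_apply]
    apply Finset.sum_congr rfl
    intro c _
    rw [Matrix.blockDiagonal'_apply_eq]
    rfl
  · intro l _ hl
    apply Finset.sum_eq_zero
    intro c _
    rw [Matrix.blockDiagonal'_apply_ne _ _ _ hl, mul_zero]
  · intro h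
    exact absurd (Finset.mem_univ j) h

lemma diagM_bd_mul_off (Sv : ∀ j, Matrix (Fin (mk j)) (Fin (mk j)) ℂ) (X : MatB mk) :
    diagM (Matrix.blockDiagonal' Sv * offM X) = 0 := by
  funext p q
  obtain ⟨i, a⟩ := p
  obtain ⟨j, b⟩ := q
  show (if i = j then _ else 0) = (0 : ℂ)
  by_cases h : i = j
  · subst h
    rw [if_pos rfl, bd_mul_apply, Matrix.mul_apply]
    apply Finset.sum_eq_zero
    intro c _
    have : blk (offM X) i i c b = 0 := by simp [blk, offM]
    rw [this, mul_zero]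
  · rw [if_neg h]

lemma diagM_off_mul_bd (Sv : ∀ j, Matrix (Fin (mk j)) (Fin (mk j)) ℂ) (X : MatB mk) :
    diagM (offM X * Matrix.blockDiagonal' Sv) = 0 := by
  funext p q
  obtain ⟨i, a⟩ := p
  obtain ⟨j, b⟩ := q
  show (if i = j then _ else 0) = (0 : ℂ)
  by_cases h : i = j
  · subst h
    rw [if_pos rfl, mul_bd_apply, Matrix.mul_apply]
    apply Finset.sum_eq_zero
    intro c _
    have : blk (offM X) i i a c = 0 := by simp [blk, offM]
    rw [this, zero_mul]
  · rw [if_neg h]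

/-- The linear block-diagonalisation operator associated with a matrix `D`. -/
noncomputable def phiL (D : MatB mk) : MatB mk →ₗ[ℂ] MatB mk where
  toFun X := D * offM X - offM X * D + diagM X
  map_add' X Y := by
    show D * offM (X + Y) - offM (X + Y) * D + diagM (X + Y) = _
    rw [offM_add, diagM_add, Matrix.mul_add, Matrix.add_mul]
    abel
  map_smul' c X := by
    show D * offM (c • X) - offM (c • X) * D + diagM (c • X) = _
    rw [offM_smul, RingHom.id_apply]
    funext p q
    by_cases h : p.1 = q.1 <;>
      simp [diagM, h, Matrix.mul_smul, Matrix.smul_mul, Matrix.add_apply, Matrix.sub_apply,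
        Matrix.smul_apply, mul_add, mul_sub]

noncomputable def phiC (D : MatB mk) : MatB mk →L[ℂ] MatB mk :=
  LinearMap.toContinuousLinearMap (phiL D)

lemma phiC_apply (D X : MatB mk) : phiC D X = D * offM X - offM X * D + diagM X := rfl

lemma diagM_phiC (Sv : ∀ j, Matrix (Fin (mk j)) (Fin (mk j)) ℂ) (X : MatB mk) :
    diagM (phiC (Matrix.blockDiagonal' Sv) X) = diagM X := by
  rw [phiC_apply, diagM_add, sub_eq_add_neg, diagM_add, diagM_neg, diagM_bd_mul_off,
    diagM_off_mul_bd, diagM_diagM]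
  simp


lemma phiC_ker (Sv : ∀ j, Matrix (Fin (mk j)) (Fin (mk j)) ℂ)
    (hdisj : ∀ i j : Fin d, i ≠ j → ∀ μ, μ ∈ spectrum ℂ (Sv i) → μ ∉ spectrum ℂ (Sv j))
    (X : MatB mk) (hX : phiC (Matrix.blockDiagonal' Sv) X = 0) : X = 0 := by
  set D := Matrix.blockDiagonal' Sv with hD
  have hdg : diagM X = 0 := by
    rw [← diagM_phiC Sv X, ← hD, hX, diagM_zero]
  have hoff : offM X = X := by
    have := offM_add_diagM X
    rwa [hdg, add_zero] at this
  have hcomm : D * X = X * D := by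
    have h0 := hX
    rw [phiC_apply, hoff, hdg, add_zero] at h0
    exact sub_eq_zero.mp h0
  have hblk : ∀ i j : Fin d, i ≠ j → blk X i j = 0 := by
    intro i j hij
    apply sylvester_unique (Sv i) (Sv j) (hdisj i j hij)
    funext a b
    have h1 := bd_mul_apply Sv X i j a b
    have h2 := mul_bd_apply Sv X i j a b
    rw [← hD] at h1 h2
    rw [← h1, ← h2, hcomm]
  funext p q
  obtain ⟨i, a⟩ := p
  obtain ⟨j, b⟩ := q
  by_cases h : i = j
  · subst h
    have := congrFun (congrFun hdg ⟨i, a⟩) ⟨i, b⟩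
    simpa [diagM] using this
  · have := congrFun (congrFun (hblk i j h) a) b
    simpa [blk] using this

lemma phiC_bijective (Sv : ∀ j, Matrix (Fin (mk j)) (Fin (mk j)) ℂ)
    (hdisj : ∀ i j : Fin d, i ≠ j → ∀ μ, μ ∈ spectrum ℂ (Sv i) → μ ∉ spectrum ℂ (Sv j)) :
    Function.Bijective (phiC (Matrix.blockDiagonal' Sv)) := by
  have hinj : Function.Injective (phiL (Matrix.blockDiagonal' Sv)) := by
    intro X Y hXY
    have : phiC (Matrix.blockDiagonal' Sv) (X - Y) = 0 := by
      show phiL (Matrix.blockDiagonal' Sv) (X - Y) = 0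
      rw [map_sub, hXY, sub_self]
    have := phiC_ker Sv hdisj (X - Y) this
    rwa [sub_eq_zero] at this
  exact ⟨hinj, LinearMap.injective_iff_surjective.mp hinj⟩

lemma isUnit_phiC (Sv : ∀ j, Matrix (Fin (mk j)) (Fin (mk j)) ℂ)
    (hdisj : ∀ i j : Fin d, i ≠ j → ∀ μ, μ ∈ spectrum ℂ (Sv i) → μ ∉ spectrum ℂ (Sv j)) :
    IsUnit (phiC (Matrix.blockDiagonal' Sv)) := by
  have hbij := phiC_bijective Sv hdisj
  let e : MatB mk ≃ₗ[ℂ] MatB mk :=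
    LinearEquiv.ofBijective (phiL (Matrix.blockDiagonal' Sv)) hbij
  refine ⟨⟨phiC (Matrix.blockDiagonal' Sv),
    LinearMap.toContinuousLinearMap (e.symm : MatB mk →ₗ[ℂ] MatB mk), ?_, ?_⟩, rfl⟩
  · apply ContinuousLinearMap.ext
    intro x
    show phiC (Matrix.blockDiagonal' Sv) (e.symm x) = x
    exact e.apply_symm_apply x
  · apply ContinuousLinearMap.ext
    intro x
    show (e.symm : MatB mk →ₗ[ℂ] MatB mk) (phiC (Matrix.blockDiagonal' Sv) x) = x
    exact e.symm_apply_apply x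

/-- The map `D ↦ phiC D` minus its constant part, as a linear map. -/
noncomputable def phiLin : MatB mk →ₗ[ℂ] (MatB mk →L[ℂ] MatB mk) where
  toFun D := phiC D - phiC 0
  map_add' D E := by
    apply ContinuousLinearMap.ext
    intro X
    show phiC (D + E) X - phiC 0 X = (phiC D X - phiC 0 X) + (phiC E X - phiC 0 X)
    simp only [phiC_apply, Matrix.zero_mul, Matrix.mul_zero, zero_sub, neg_add_cancel,
      Matrix.add_mul, Matrix.mul_add, zero_add, add_sub_cancel_right]
    abel
  map_smul' c D := by
    apply ContinuousLinearMap.ext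
    intro X
    show phiC (c • D) X - phiC 0 X = c • (phiC D X - phiC 0 X)
    simp only [phiC_apply, Matrix.zero_mul, Matrix.mul_zero, Matrix.smul_mul, Matrix.mul_smul]
    module

lemma phiC_eq_phiLin (D : MatB mk) : phiC D = phiLin D + phiC 0 := by
  simp [phiLin]

lemma continuous_phiC {Y : Type*} [TopologicalSpace Y] {f : Y → MatB mk}
    (hf : Continuous f) : Continuous fun y => phiC (f y) := by
  have h1 : Continuous fun y => phiLin (mk := mk) (f y) :=
    (LinearMap.continuous_of_finiteDimensional phiLin).comp hf
  have : (fun y => phiC (f y)) = fun y => phiLin (f y) + phiC 0 := by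
    funext y; exact phiC_eq_phiLin (f y)
  rw [this]
  exact h1.add continuous_const


lemma diagM_smul (c : ℂ) (X : MatB mk) : diagM (c • X) = c • diagM X := by
  funext p q
  by_cases h : p.1 = q.1 <;> simp [diagM, h, Matrix.smul_apply]

noncomputable def offCL : MatB mk →L[ℂ] MatB mk :=
  LinearMap.toContinuousLinearMap
    { toFun := offM, map_add' := offM_add, map_smul' := fun c X => offM_smul c X }

noncomputable def diagCL : MatB mk →L[ℂ] MatB mk :=
  LinearMap.toContinuousLinearMap
    { toFun := diagM, map_add' := diagM_add, map_smul' := fun c X => diagM_smul c X }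

lemma offCL_apply (X : MatB mk) : offCL X = offM X := rfl
lemma diagCL_apply (X : MatB mk) : diagCL X = diagM X := rfl

end UBDAux

open UBDAux

/-- Corollary 3 of the paper: uniform block-diagonalisation. -/
theorem uniform_block_diagonalisation {Υ : Type*} [MetricSpace Υ] [CompactSpace Υ]
    {d : ℕ} (hd : 1 ≤ d) (mk : Fin d → ℕ)
    (A : ℝ → Υ → Matrix ((j : Fin d) × Fin (mk j)) ((j : Fin d) × Fin (mk j)) ℂ)
    (Ak : ℕ → Υ → Matrix ((j : Fin d) × Fin (mk j)) ((j : Fin d) × Fin (mk j)) ℂ)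
    (hAkcont : ∀ k, Continuous (Ak k))
    (hAkbdd : ∀ k, ∃ c : ℝ, ∀ v, ‖Ak k v‖ ≤ c)
    (hexp : ∀ N : ℕ, ∃ C ε : ℝ, 0 < C ∧ 0 < ε ∧ ∀ v : Υ, ∀ ρ : ℝ, |ρ| ≤ ε →
      ‖A ρ v - ∑ k ∈ Finset.range N, (ρ : ℂ) ^ k • Ak k v‖ ≤ C * |ρ| ^ N)
    (S : (j : Fin d) → Υ → Matrix (Fin (mk j)) (Fin (mk j)) ℂ)
    (hScont : ∀ j, Continuous (S j))
    (hA0 : ∀ v, Ak 0 v = Matrix.blockDiagonal' (fun j => S j v))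
    (δ : ℝ) (hδ : 0 < δ)
    (hsep : ∀ i j : Fin d, i ≠ j →
      ∃ α : Υ → ℂ, ∃ β : Υ → ℝ, Continuous α ∧ Continuous β ∧ (∀ v, ‖α v‖ = 1) ∧
        (∀ v, ∀ lam ∈ spectrum ℂ (S i v), β v + δ / 2 < (α v * lam).re) ∧
        (∀ v, ∀ mu ∈ spectrum ℂ (S j v), (α v * mu).re < β v - δ / 2)) :
    ∀ N : ℕ,
      ∃ M Λ : ℕ → Υ → Matrix ((j : Fin d) × Fin (mk j)) ((j : Fin d) × Fin (mk j)) ℂ,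
        (∀ v, M 0 v = 1) ∧
        (∀ k < N, ∃ c : ℝ, ∀ v, ‖M k v‖ ≤ c) ∧
        (∀ k < N, ∃ c : ℝ, ∀ v, ‖Λ k v‖ ≤ c) ∧
        (∀ k < N, ∀ v, ∀ i i' : (j : Fin d) × Fin (mk j), i.1 ≠ i'.1 → Λ k v i i' = 0) ∧
        ∃ C' ε' : ℝ, 0 < C' ∧ 0 < ε' ∧ ∀ v : Υ, ∀ ρ : ℝ, |ρ| ≤ ε' →
          ‖A ρ v * (∑ k ∈ Finset.range N, (ρ : ℂ) ^ k • M k v)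
              - (∑ k ∈ Finset.range N, (ρ : ℂ) ^ k • M k v)
                * (∑ k ∈ Finset.range N, (ρ : ℂ) ^ k • Λ k v)‖ ≤ C' * |ρ| ^ N := by
  classical
  intro N
  -- pointwise disjointness of the block spectra
  have hdisj : ∀ v, ∀ i j : Fin d, i ≠ j →
      ∀ μ, μ ∈ spectrum ℂ (S i v) → μ ∉ spectrum ℂ (S j v) := by
    intro v i j hij μ hi hj
    obtain ⟨α, β, -, -, -, h1, h2⟩ := hsep i j hij
    have ha := h1 v μ hi
    have hb := h2 v μ hj
    linarith
  -- the block-diagonalisation operators are invertible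
  have hunit : ∀ v, IsUnit (phiC (Ak 0 v)) := by
    intro v
    rw [hA0 v]
    exact isUnit_phiC _ (hdisj v)
  have hphicont : Continuous fun v => phiC (Ak 0 v) := continuous_phiC (hAkcont 0)
  have hinvcont : Continuous fun v => Ring.inverse (phiC (Ak 0 v)) := by
    rw [continuous_iff_continuousAt]
    intro v
    have h1 : ContinuousAt Ring.inverse (phiC (Ak 0 v)) := by
      letI : NormedRing (MatB mk →L[ℂ] MatB mk) := ContinuousLinearMap.toNormedRing
      have : HasSummableGeomSeries (MatB mk →L[ℂ] MatB mk) := by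
        have : CompleteSpace (MatB mk →L[ℂ] MatB mk) := FiniteDimensional.complete ℂ _
        exact @instHasSummableGeomSeriesOfCompleteSpace _ ContinuousLinearMap.toNormedRing this
      have := NormedRing.inverse_continuousAt (R := MatB mk →L[ℂ] MatB mk) (hunit v).unit
      rwa [(hunit v).unit_spec] at this
    exact ContinuousAt.comp (x := v) h1 hphicont.continuousAt
  -- uniform bounds from compactness
  have hbound : ∀ (f : Υ → MatB mk), Continuous f → ∃ c, 0 ≤ c ∧ ∀ v, ‖f v‖ ≤ c := by
    intro f hf
    obtain ⟨c, hc⟩ := (isCompact_range hf.norm).bddAbove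
    exact ⟨max c 0, le_max_right _ _, fun v => le_trans (hc ⟨v, rfl⟩) (le_max_left _ _)⟩
  -- the recursive construction
  have key : ∀ n : ℕ, 1 ≤ n →
      ∃ M Λ : ℕ → Υ → MatB mk,
        (∀ v, M 0 v = 1) ∧ (∀ v, Λ 0 v = Ak 0 v) ∧
        (∀ k, Continuous (M k)) ∧ (∀ k, Continuous (Λ k)) ∧
        (∀ k v, ∀ p q : (j : Fin d) × Fin (mk j), p.1 ≠ q.1 → Λ k v p q = 0) ∧
        (∀ k, k < n → ∀ v,
          ∑ i ∈ Finset.range (k+1), Ak i v * M (k-i) v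
            = ∑ i ∈ Finset.range (k+1), M i v * Λ (k-i) v) := by
    intro n hn
    induction n with
    | zero => omega
    | succ n ih =>
      rcases Nat.eq_zero_or_pos n with hn0 | hn1
      · -- base case n + 1 = 1
        subst hn0
        refine ⟨fun k v => if k = 0 then 1 else 0, fun k v => if k = 0 then Ak 0 v else 0,
          fun v => rfl, fun v => rfl, ?_, ?_, ?_, ?_⟩
        · intro k
          by_cases hk : k = 0 <;> simp only [hk, if_true, if_false] <;>
            first | exact continuous_const | simp
        · intro k
          by_cases hk : k = 0 <;> simp only [hk, if_true, if_false]
          · exact hAkcont 0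
          · exact continuous_const
        · intro k v p q hpq
          by_cases hk : k = 0
          · simp only [hk, if_true]
            obtain ⟨i, a⟩ := p
            obtain ⟨j, b⟩ := q
            rw [hA0 v]
            exact Matrix.blockDiagonal'_apply_ne _ _ _ hpq
          · simp [hk]
        · intro k hk v
          interval_cases k
          simp
      · -- inductive step
        obtain ⟨M, Λ, hM0, hΛ0, hMc, hΛc, hΛbd, hid⟩ := ih hn1
        set R : Υ → MatB mk := fun v =>
          (∑ i ∈ Finset.range (n-1), M (i+1) v * Λ (n-1-i) v)
            - (∑ i ∈ Finset.range n, Ak (i+1) v * M (n-1-i) v) with hR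
        have hRcont : Continuous R := by
          apply Continuous.sub
          · exact continuous_finset_sum _ fun i _ => (hMc (i+1)).mul (hΛc (n-1-i))
          · exact continuous_finset_sum _ fun i _ => (hAkcont (i+1)).mul (hMc (n-1-i))
        set Mw : Υ → MatB mk := fun v => Ring.inverse (phiC (Ak 0 v)) (offM (R v)) with hMw
        set Λw : Υ → MatB mk := fun v => -diagM (R v) with hΛw
        have hMwc : Continuous Mw := by
          have hoffR : Continuous fun v => offM (R v) := by
            have : (fun v => offM (R v)) = fun v => offCL (R v) := rfl
            rw [this]
            exact (ContinuousLinearMap.continuous offCL).comp hRcont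
          exact hinvcont.clm_apply hoffR
        have hΛwc : Continuous Λw := by
          have : (fun v => diagM (R v)) = fun v => diagCL (R v) := rfl
          exact Continuous.neg (this ▸ (ContinuousLinearMap.continuous diagCL).comp hRcont)
        have hPhiM : ∀ v, phiC (Ak 0 v) (Mw v) = offM (R v) := by
          intro v
          have hc := Ring.mul_inverse_cancel _ (hunit v)
          calc phiC (Ak 0 v) (Ring.inverse (phiC (Ak 0 v)) (offM (R v)))
              = (phiC (Ak 0 v) * Ring.inverse (phiC (Ak 0 v))) (offM (R v)) := rfl
            _ = (1 : MatB mk →L[ℂ] MatB mk) (offM (R v)) := by rw [hc]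
            _ = offM (R v) := rfl
        have hdiagMw : ∀ v, diagM (Mw v) = 0 := by
          intro v
          have h1 : diagM (phiC (Ak 0 v) (Mw v)) = diagM (Mw v) := by
            rw [hA0 v]
            exact diagM_phiC _ _
          rw [← h1, hPhiM v, diagM_offM]
        have hoffMw : ∀ v, offM (Mw v) = Mw v := by
          intro v
          have := offM_add_diagM (Mw v)
          rwa [hdiagMw v, add_zero] at this
        have hmain : ∀ v, Ak 0 v * Mw v - Mw v * Ak 0 v - Λw v = R v := by
          intro v
          have h1 := hPhiM v
          rw [phiC_apply, hoffMw v, hdiagMw v, add_zero] at h1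
          rw [h1]
          show offM (R v) - -diagM (R v) = R v
          rw [sub_neg_eq_add, offM_add_diagM]
        refine ⟨Function.update M n Mw, Function.update Λ n Λw, ?_, ?_, ?_, ?_, ?_, ?_⟩
        · intro v
          rw [Function.update_of_ne (by omega)]
          exact hM0 v
        · intro v
          rw [Function.update_of_ne (by omega)]
          exact hΛ0 v
        · intro k
          by_cases hk : k = n
          · subst hk; rw [Function.update_self]; exact hMwc
          · rw [Function.update_of_ne hk]; exact hMc k
        · intro k
          by_cases hk : k = n
          · subst hk; rw [Function.update_self]; exact hΛwc
          · rw [Function.update_of_ne hk]; exact hΛc k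
        · intro k v p q hpq
          by_cases hk : k = n
          · subst hk
            rw [Function.update_self]
            show -diagM (R v) p q = 0
            simp [diagM, hpq, Matrix.neg_apply]
          · rw [Function.update_of_ne hk]
            exact hΛbd k v p q hpq
        · intro k hk v
          rcases Nat.lt_succ_iff_lt_or_eq.mp hk with hk' | rfl
          · -- old identities, untouched indices
            have e1 : ∀ i ∈ Finset.range (k+1),
                Ak i v * Function.update M n Mw (k-i) v = Ak i v * M (k-i) v := by
              intro i hi
              rw [Function.update_of_ne (by omega)]
            have e2 : ∀ i ∈ Finset.range (k+1),
                Function.update M n Mw i v * Function.update Λ n Λw (k-i) v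
                  = M i v * Λ (k-i) v := by
              intro i hi
              have hi' : i < n := by
                have := Finset.mem_range.mp hi; omega
              rw [Function.update_of_ne (by omega), Function.update_of_ne (by omega)]
            rw [Finset.sum_congr rfl e1, Finset.sum_congr rfl e2]
            exact hid k hk' v
          · -- the new identity at order k
            rw [Finset.sum_range_succ', Finset.sum_range_succ']
            have e1 : ∀ i ∈ Finset.range k,
                Ak (i+1) v * Function.update M k Mw (k-(i+1)) v
                  = Ak (i+1) v * M (k-1-i) v := by
              intro i hi
              have hi' := Finset.mem_range.mp hi
              rw [Function.update_of_ne (by omega), show k-(i+1) = k-1-i by omega]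
            have e2 : ∀ i ∈ Finset.range k,
                Function.update M k Mw (i+1) v * Function.update Λ k Λw (k-(i+1)) v
                  = Function.update M k Mw (i+1) v * Λ (k-1-i) v := by
              intro i hi
              have hi' := Finset.mem_range.mp hi
              rw [Function.update_of_ne (show k-(i+1) ≠ k by omega) Λw Λ, show k-(i+1) = k-1-i by omega]
            rw [Finset.sum_congr rfl e1, Finset.sum_congr rfl e2]
            rw [Nat.sub_zero, Function.update_self, Function.update_self,
              Function.update_of_ne (by omega : (0:ℕ) ≠ k), hM0 v, Matrix.one_mul]
            -- split off the top term of the RHS sum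
            have hsplit : ∑ i ∈ Finset.range k,
                Function.update M k Mw (i+1) v * Λ (k-1-i) v
                  = (∑ i ∈ Finset.range (k-1), M (i+1) v * Λ (k-1-i) v) + Mw v * Ak 0 v := by
              have hn' : k = (k-1) + 1 := by omega
              rw [hn', Finset.sum_range_succ]
              congr 1
              · apply Finset.sum_congr rfl
                intro i hi
                have hi' := Finset.mem_range.mp hi
                rw [Function.update_of_ne (by omega)]
              · rw [show k - 1 + 1 = k by omega, Function.update_self,
                  show k - 1 - (k-1) = 0 by omega, hΛ0 v]
            rw [hsplit]
            have h := hmain v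
            rw [hR] at h
            rw [← sub_eq_zero]
            have : (∑ i ∈ Finset.range k, Ak (i+1) v * M (k-1-i) v) + Ak 0 v * Mw v
                - (((∑ i ∈ Finset.range (k-1), M (i+1) v * Λ (k-1-i) v) + Mw v * Ak 0 v) + Λw v)
                = (Ak 0 v * Mw v - Mw v * Ak 0 v - Λw v)
                  - ((∑ i ∈ Finset.range (k-1), M (i+1) v * Λ (k-1-i) v)
                    - (∑ i ∈ Finset.range k, Ak (i+1) v * M (k-1-i) v)) := by abel
            rw [this, h, sub_self]
  rcases Nat.eq_zero_or_pos N with hN0 | hN1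
  · -- trivial case N = 0
    subst hN0
    refine ⟨fun _ _ => 1, fun _ _ => 0, fun v => rfl,
      fun k hk => absurd hk (Nat.not_lt_zero k),
      fun k hk => absurd hk (Nat.not_lt_zero k),
      fun k hk => absurd hk (Nat.not_lt_zero k),
      1, 1, one_pos, one_pos, ?_⟩
    intro v ρ hρ
    simp only [Finset.range_zero, Finset.sum_empty, Matrix.mul_zero, Matrix.zero_mul,
      sub_zero, norm_zero, pow_zero, mul_one]
    exact zero_le_one
  · obtain ⟨M, Λ, hM0, hΛ0, hMc, hΛc, hΛbd, hid⟩ := key N hN1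
    choose cM hcM0 hcM using fun k => hbound (M k) (hMc k)
    choose cΛ hcΛ0 hcΛ using fun k => hbound (Λ k) (hΛc k)
    have hcA' : ∀ k, ∃ c, 0 ≤ c ∧ ∀ v, ‖Ak k v‖ ≤ c := by
      intro k
      obtain ⟨c, hc⟩ := hAkbdd k
      exact ⟨max c 0, le_max_right _ _, fun v => (hc v).trans (le_max_left _ _)⟩
    choose cA hcA0 hcA using hcA'
    obtain ⟨C, ε, hC, hε, hAexp⟩ := hexp N
    set cP := ∑ k ∈ Finset.range N, cM k with hcP
    have hcPnn : 0 ≤ cP := Finset.sum_nonneg fun k _ => hcM0 k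
    set B := ∑ p ∈ Finset.range N ×ˢ Finset.range N,
      (cA p.1 * cM p.2 + cM p.1 * cΛ p.2) with hB
    have hBnn : 0 ≤ B :=
      Finset.sum_nonneg fun p _ =>
        add_nonneg (mul_nonneg (hcA0 _) (hcM0 _)) (mul_nonneg (hcM0 _) (hcΛ0 _))
    refine ⟨M, Λ, hM0, fun k _ => ⟨cM k, hcM k⟩, fun k _ => ⟨cΛ k, hcΛ k⟩,
      fun k _ v p q h => hΛbd k v p q h,
      C * cP + B + 1, min ε 1, by positivity, lt_min hε one_pos, ?_⟩
    intro v ρ hρ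
    have hρε : |ρ| ≤ ε := le_trans hρ (min_le_left _ _)
    have hρ1 : |ρ| ≤ 1 := le_trans hρ (min_le_right _ _)
    have habs : (0:ℝ) ≤ |ρ| := abs_nonneg ρ
    set P := ∑ k ∈ Finset.range N, (ρ:ℂ)^k • M k v with hP
    set T := ∑ k ∈ Finset.range N, (ρ:ℂ)^k • Ak k v with hT
    set Q := ∑ k ∈ Finset.range N, (ρ:ℂ)^k • Λ k v with hQ
    have hnormsmul : ∀ (s : ℕ) (X : MatB mk), ‖(ρ:ℂ)^s • X‖ = |ρ|^s * ‖X‖ := by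
      intro s X
      rw [norm_smul, norm_pow, Complex.norm_real, Real.norm_eq_abs]
    have hPle : ‖P‖ ≤ cP := by
      refine le_trans (norm_sum_le _ _) ?_
      apply Finset.sum_le_sum
      intro k _
      rw [hnormsmul]
      calc |ρ|^k * ‖M k v‖ ≤ 1 * cM k :=
            mul_le_mul (pow_le_one₀ habs hρ1) (hcM k v) (norm_nonneg _) zero_le_one
        _ = cM k := one_mul _
    have h1 : T * P - P * Q = ∑ p ∈ Finset.range N ×ˢ Finset.range N,
        (ρ:ℂ)^(p.1+p.2) • (Ak p.1 v * M p.2 v - M p.1 v * Λ p.2 v) := by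
      rw [hT, hP, hQ, Finset.sum_mul_sum, Finset.sum_mul_sum, ← Finset.sum_sub_distrib,
        Finset.sum_product]
      apply Finset.sum_congr rfl
      intro k _
      rw [← Finset.sum_sub_distrib]
      apply Finset.sum_congr rfl
      intro l _
      rw [Matrix.smul_mul, Matrix.mul_smul, smul_smul, ← pow_add,
        Matrix.smul_mul, Matrix.mul_smul, smul_smul, ← pow_add, smul_sub]
    have hTPQ : T * P - P * Q = ∑ p ∈ (Finset.range N ×ˢ Finset.range N).filter
        (fun p => ¬ p.1 + p.2 < N),
        (ρ:ℂ)^(p.1+p.2) • (Ak p.1 v * M p.2 v - M p.1 v * Λ p.2 v) := by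
      rw [h1, ← Finset.sum_filter_add_sum_filter_not (Finset.range N ×ˢ Finset.range N)
        (fun p => p.1 + p.2 < N)]
      have hzero : ∑ p ∈ (Finset.range N ×ˢ Finset.range N).filter (fun p => p.1 + p.2 < N),
          (ρ:ℂ)^(p.1+p.2) • (Ak p.1 v * M p.2 v - M p.1 v * Λ p.2 v) = 0 := by
        have hbij : ∑ p ∈ (Finset.range N ×ˢ Finset.range N).filter (fun p => p.1 + p.2 < N),
            (ρ:ℂ)^(p.1+p.2) • (Ak p.1 v * M p.2 v - M p.1 v * Λ p.2 v)
            = ∑ q ∈ (Finset.range N).sigma (fun s => Finset.range (s+1)),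
              (ρ:ℂ)^(q.1) • (Ak q.2 v * M (q.1-q.2) v - M q.2 v * Λ (q.1-q.2) v) := by
          apply Finset.sum_nbij' (i := fun p => (⟨p.1+p.2, p.1⟩ : (_ : ℕ) × ℕ))
            (j := fun q => (q.2, q.1-q.2))
          · intro p hp
            simp only [Finset.mem_filter, Finset.mem_product, Finset.mem_range,
              Finset.mem_sigma] at *
            omega
          · intro q hq
            simp only [Finset.mem_filter, Finset.mem_product, Finset.mem_range,
              Finset.mem_sigma] at *
            omega
          · intro p _
            simp [Nat.add_sub_cancel_left]
          · intro q hq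
            simp only [Finset.mem_sigma, Finset.mem_range] at hq
            show (⟨q.2 + (q.1 - q.2), q.2⟩ : (_ : ℕ) × ℕ) = q
            obtain ⟨s, i⟩ := q
            simp only at hq ⊢
            rw [show i + (s - i) = s by omega]
          · intro p _
            rw [Nat.add_sub_cancel_left]
        rw [hbij, Finset.sum_sigma]
        apply Finset.sum_eq_zero
        intro s hs
        have hpull : ∑ i ∈ Finset.range (s+1),
            (ρ:ℂ)^s • (Ak i v * M (s-i) v - M i v * Λ (s-i) v)
            = (ρ:ℂ)^s • ((∑ i ∈ Finset.range (s+1), Ak i v * M (s-i) v)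
              - ∑ i ∈ Finset.range (s+1), M i v * Λ (s-i) v) := by
          rw [← Finset.smul_sum, Finset.sum_sub_distrib]
        rw [hpull, hid s (Finset.mem_range.mp hs) v, sub_self, smul_zero]
      rw [hzero, zero_add]
    have hfin : ‖T * P - P * Q‖ ≤ |ρ|^N * B := by
      rw [hTPQ]
      refine le_trans (norm_sum_le _ _) ?_
      have hterm : ∀ p ∈ (Finset.range N ×ˢ Finset.range N).filter (fun p => ¬ p.1 + p.2 < N),
          ‖(ρ:ℂ)^(p.1+p.2) • (Ak p.1 v * M p.2 v - M p.1 v * Λ p.2 v)‖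
            ≤ |ρ|^N * (cA p.1 * cM p.2 + cM p.1 * cΛ p.2) := by
        intro p hp
        simp only [Finset.mem_filter, Finset.mem_product, Finset.mem_range] at hp
        rw [hnormsmul]
        apply mul_le_mul
        · exact pow_le_pow_of_le_one habs hρ1 (by omega)
        · refine le_trans (norm_sub_le _ _) (add_le_add ?_ ?_)
          · exact le_trans (norm_mul_le _ _)
              (mul_le_mul (hcA _ _) (hcM _ _) (norm_nonneg _) (hcA0 _))
          · exact le_trans (norm_mul_le _ _)
              (mul_le_mul (hcM _ _) (hcΛ _ _) (norm_nonneg _) (hcM0 _))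
        · exact norm_nonneg _
        · exact pow_nonneg habs N
      refine le_trans (Finset.sum_le_sum hterm) ?_
      rw [← Finset.mul_sum]
      apply mul_le_mul_of_nonneg_left ?_ (pow_nonneg habs N)
      apply Finset.sum_le_sum_of_subset_of_nonneg (Finset.filter_subset _ _)
      intro p _ _
      exact add_nonneg (mul_nonneg (hcA0 _) (hcM0 _)) (mul_nonneg (hcM0 _) (hcΛ0 _))
    have hsplit : A ρ v * P - P * Q = (A ρ v - T) * P + (T * P - P * Q) := by
      rw [Matrix.sub_mul]
      abel
    calc ‖A ρ v * P - P * Q‖ ≤ ‖(A ρ v - T) * P‖ + ‖T * P - P * Q‖ := by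
          rw [hsplit]; exact norm_add_le _ _
      _ ≤ ‖A ρ v - T‖ * ‖P‖ + |ρ|^N * B := add_le_add (norm_mul_le _ _) hfin
      _ ≤ (C * |ρ|^N) * cP + |ρ|^N * B := by
          refine add_le_add_left (mul_le_mul (hAexp v ρ hρε) hPle (norm_nonneg _) ?_) _
          positivity
      _ ≤ (C * cP + B + 1) * |ρ|^N := by nlinarith [pow_nonneg habs N]
end

section
/- Let A⁺ ∈ ℂ^{m×m} and A⁻ ∈ ℂ^{n×n} be normal matrices (commuting with their conjugate transposes), and suppose there exist α ∈ ℂ with |α| = 1, β ∈ ℝ and δ > 0 such that every eigenvalue λ of A⁺ satisfies Re(αλ) ≥ β + δ/2 and every eigenvalue μ of A⁻ satisfies Re(αμ) ≤ β − δ/2. Then for every B ∈ ℂ^{m×n} the matrix X = α·∫₀^∞ exp(−sαA⁺) B exp(sαA⁻) ds is well defined, solves A⁺X − XA⁻ = B, and satisfies ‖X‖ ≤ δ^{−1}‖B‖, where ‖·‖ denotes the L² operator norm of matrices. -/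
open NormedSpace MeasureTheory  -- `exp`
open scoped Matrix.Norms.L2Operator

noncomputable instance matrixCStarAlgebra {k : ℕ} : CStarAlgebra (Matrix (Fin k) (Fin k) ℂ) where
  toNormedRing := Matrix.instL2OpNormedRing
  toStarRing := inferInstance
  toCompleteSpace := inferInstance
  toCStarRing := Matrix.instCStarRing
  toNormedAlgebra := Matrix.instL2OpNormedAlgebra
  toStarModule := inferInstance

lemma aux_norm_exp_le {k : ℕ} (M : Matrix (Fin k) (Fin k) ℂ)
    [hM : IsStarNormal M] {t : ℝ} (h : ∀ z ∈ spectrum ℂ M, z.re ≤ t) :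
    ‖exp M‖ ≤ Real.exp t := by
  rw [← CFC.complex_exp_eq_normedSpace_exp hM]
  refine norm_cfc_le (Real.exp_pos t).le fun z hz => ?_
  rw [Complex.norm_exp]
  exact Real.exp_le_exp.2 (h z hz)

lemma aux_isStarNormal_smul {k : ℕ} (M : Matrix (Fin k) (Fin k) ℂ)
    [hM : IsStarNormal M] (t : ℂ) : IsStarNormal (t • M) := by
  constructor
  rw [star_smul]
  exact (hM.star_comm_self.smul_left _).smul_right _

lemma aux_norm_exp_smul_le {k : ℕ} (hk : k ≠ 0) (M : Matrix (Fin k) (Fin k) ℂ)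
    [hM : IsStarNormal M] (t : ℂ) {r : ℝ} (h : ∀ z ∈ spectrum ℂ M, (t * z).re ≤ r) :
    ‖exp (t • M)‖ ≤ Real.exp r := by
  haveI : Nonempty (Fin k) := ⟨⟨0, Nat.pos_of_ne_zero hk⟩⟩
  haveI := aux_isStarNormal_smul M t
  refine aux_norm_exp_le (t • M) fun z hz => ?_
  rw [spectrum.smul_eq_smul t M (spectrum.nonempty M)] at hz
  obtain ⟨w, hw, rfl⟩ := hz
  exact h w hw

lemma aux_hasDerivAt_mul2 {E F G : Type*} [NormedAddCommGroup E] [NormedSpace ℂ E]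
    [NormedAddCommGroup F] [NormedSpace ℂ F] [NormedAddCommGroup G] [NormedSpace ℂ G]
    (b : E →L[ℂ] F →L[ℂ] G) {f : ℝ → E} {g : ℝ → F} {f' : E} {g' : F} {s : ℝ}
    (hf : HasDerivAt f f' s) (hg : HasDerivAt g g' s) :
    HasDerivAt (fun u => b (f u) (g u)) (b f' (g s) + b (f s) g') s := by
  have h1 := (b.isBoundedBilinearMap.hasFDerivAt (f s, g s)).restrictScalars ℝ
  have h3 := h1.comp_hasDerivAt s (hf.prodMk hg)
  simpa [Function.comp_def, add_comm] using h3

noncomputable def mulCLM {a b c : ℕ} :=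
  LinearMap.mkContinuous₂
    (LinearMap.mk₂ ℂ
      (fun (X : Matrix (Fin a) (Fin b) ℂ) (Y : Matrix (Fin b) (Fin c) ℂ) => X * Y)
      (fun X X' Y => Matrix.add_mul X X' Y)
      (fun r X Y => Matrix.smul_mul r X Y)
      (fun X Y Y' => Matrix.mul_add X Y Y')
      (fun r X Y => Matrix.mul_smul X r Y))
    1 (fun X Y => by simpa using Matrix.l2_opNorm_mul X Y)

@[simp] lemma mulCLM_apply {a b c : ℕ} (X : Matrix (Fin a) (Fin b) ℂ)
    (Y : Matrix (Fin b) (Fin c) ℂ) : mulCLM X Y = X * Y := rfl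

set_option maxHeartbeats 1000000 in
/-- Let `Ap`, `Am` be normal matrices whose spectra are separated by a closed
strip of width `δ` around the line `{ζ : Re (α ζ) = β}` (with `|α| = 1`).  Then for every `B` the
matrix `X = α • ∫₀^∞ exp (-s α Ap) * B * exp (s α Am) ds` is well defined (the integrand is
Bochner integrable on `[0,∞)`), solves `Ap X - X Am = B`, and satisfies `‖X‖ ≤ δ⁻¹ ‖B‖` in the
`L²` operator norm. -/
theorem sylvester_normal_bound {m n : ℕ}
    (Ap : Matrix (Fin m) (Fin m) ℂ) (Am : Matrix (Fin n) (Fin n) ℂ)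
    (hApnormal : IsStarNormal Ap) (hAmnormal : IsStarNormal Am)
    (α : ℂ) (hα : ‖α‖ = 1) (β δ : ℝ) (hδ : 0 < δ)
    (hAp : ∀ lam ∈ spectrum ℂ Ap, β + δ / 2 ≤ (α * lam).re)
    (hAm : ∀ mu ∈ spectrum ℂ Am, (α * mu).re ≤ β - δ / 2)
    (B : Matrix (Fin m) (Fin n) ℂ) :
    IntegrableOn
      (fun s : ℝ => exp ((-((s : ℂ) * α)) • Ap) * B * exp (((s : ℂ) * α) • Am))
      (Set.Ici 0) ∧
    Ap * (α • ∫ s in Set.Ici (0:ℝ),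
        exp ((-((s : ℂ) * α)) • Ap) * B * exp (((s : ℂ) * α) • Am))
      - (α • ∫ s in Set.Ici (0:ℝ),
        exp ((-((s : ℂ) * α)) • Ap) * B * exp (((s : ℂ) * α) • Am)) * Am = B ∧
    ‖α • ∫ s in Set.Ici (0:ℝ),
        exp ((-((s : ℂ) * α)) • Ap) * B * exp (((s : ℂ) * α) • Am)‖ ≤ δ⁻¹ * ‖B‖ := by
  by_cases hmn : m = 0 ∨ n = 0
  · haveI : Subsingleton (Matrix (Fin m) (Fin n) ℂ) := by
      rcases hmn with h | h
      · subst h; exact Matrix.subsingleton_of_empty_left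
      · subst h; exact Matrix.subsingleton_of_empty_right
    have h0 : (fun s : ℝ => exp ((-((s : ℂ) * α)) • Ap) * B * exp (((s : ℂ) * α) • Am))
        = fun _ => (0 : Matrix (Fin m) (Fin n) ℂ) := funext fun _ => Subsingleton.elim _ _
    refine ⟨by rw [h0]; exact integrableOn_zero, Subsingleton.elim _ _, ?_⟩
    have h1 : (α • ∫ s in Set.Ici (0:ℝ),
        exp ((-((s : ℂ) * α)) • Ap) * B * exp (((s : ℂ) * α) • Am))
        = (0 : Matrix (Fin m) (Fin n) ℂ) := Subsingleton.elim _ _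
    have h2 : B = (0 : Matrix (Fin m) (Fin n) ℂ) := Subsingleton.elim _ _
    rw [h1, norm_zero]; positivity
  · push_neg at hmn
    obtain ⟨hm, hn⟩ := hmn
    set c : ℝ := β + δ / 2 with hc
    set d : ℝ := β - δ / 2 with hd
    set P : Matrix (Fin m) (Fin m) ℂ := (-α) • Ap with hP
    set Q : Matrix (Fin n) (Fin n) ℂ := α • Am with hQ
    set G : ℝ → Matrix (Fin m) (Fin n) ℂ :=
      fun s => exp ((s : ℂ) • P) * B * exp ((s : ℂ) • Q) with hGdef
    have hFeq : (fun s : ℝ => exp ((-((s : ℂ) * α)) • Ap) * B * exp (((s : ℂ) * α) • Am))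
        = G := by
      funext s
      rw [hGdef]
      simp only [hP, hQ, smul_smul, mul_neg]
    rw [hFeq]
    -- norm bounds for the two exponentials
    have hgnorm : ∀ s : ℝ, 0 ≤ s → ‖exp ((s : ℂ) • P)‖ ≤ Real.exp (-(s * c)) := by
      intro s hs
      have hsm : (s : ℂ) • P = (-((s : ℂ) * α)) • Ap := by
        rw [hP, smul_smul, mul_neg]
      rw [hsm]
      refine aux_norm_exp_smul_le hm Ap _ fun z hz => ?_
      have h1 : (-((s : ℂ) * α) * z) = -((s : ℂ) * (α * z)) := by ring
      rw [h1, Complex.neg_re, Complex.re_ofReal_mul]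
      exact neg_le_neg (mul_le_mul_of_nonneg_left (hAp z hz) hs)
    have hhnorm : ∀ s : ℝ, 0 ≤ s → ‖exp ((s : ℂ) • Q)‖ ≤ Real.exp (s * d) := by
      intro s hs
      have hsm : (s : ℂ) • Q = (((s : ℂ) * α)) • Am := by rw [hQ, smul_smul]
      rw [hsm]
      refine aux_norm_exp_smul_le hn Am _ fun z hz => ?_
      have h1 : ((s : ℂ) * α * z) = (s : ℂ) * (α * z) := by ring
      rw [h1, Complex.re_ofReal_mul]
      exact mul_le_mul_of_nonneg_left (hAm z hz) hs
    -- bound on G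
    have hGbound : ∀ s ∈ Set.Ici (0:ℝ), ‖G s‖ ≤ ‖B‖ * Real.exp (-δ * s) := by
      intro s hs
      have hs : (0:ℝ) ≤ s := hs
      have h1 : ‖G s‖ ≤ ‖exp ((s : ℂ) • P)‖ * ‖B‖ * ‖exp ((s : ℂ) • Q)‖ := by
        rw [hGdef]
        calc ‖exp ((s : ℂ) • P) * B * exp ((s : ℂ) • Q)‖
            ≤ ‖exp ((s : ℂ) • P) * B‖ * ‖exp ((s : ℂ) • Q)‖ :=
              Matrix.l2_opNorm_mul _ _
          _ ≤ ‖exp ((s : ℂ) • P)‖ * ‖B‖ * ‖exp ((s : ℂ) • Q)‖ :=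
              mul_le_mul_of_nonneg_right (Matrix.l2_opNorm_mul _ _) (norm_nonneg _)
      have h2 : ‖exp ((s : ℂ) • P)‖ * ‖B‖ * ‖exp ((s : ℂ) • Q)‖
          ≤ Real.exp (-(s * c)) * ‖B‖ * Real.exp (s * d) := by
        exact mul_le_mul (mul_le_mul_of_nonneg_right (hgnorm s hs) (norm_nonneg B))
          (hhnorm s hs) (norm_nonneg _) (by positivity)
      have h3 : Real.exp (-(s * c)) * ‖B‖ * Real.exp (s * d) = ‖B‖ * Real.exp (-δ * s) := by
        rw [mul_comm (Real.exp (-(s * c))) ‖B‖, mul_assoc, ← Real.exp_add]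
        have he : -(s * c) + s * d = -δ * s := by rw [hc, hd]; ring
        rw [he]
      linarith [h1, h2, h3.le, h3.ge]
    -- derivatives of the exponentials
    have hgd : ∀ s : ℝ, HasDerivAt (fun u : ℝ => exp ((u : ℂ) • P))
        (exp ((s : ℂ) • P) * P) s := by
      intro s
      have h1 := hasDerivAt_exp_smul_const (𝕂 := ℂ) P ((s : ℝ) : ℂ)
      have h2 := h1.scomp s Complex.ofRealCLM.hasDerivAt
      simp only [Function.comp_def, Complex.ofRealCLM_apply, Complex.ofReal_one, one_smul] at h2
      exact h2
    have hhd : ∀ s : ℝ, HasDerivAt (fun u : ℝ => exp ((u : ℂ) • Q))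
        (exp ((s : ℂ) • Q) * Q) s := by
      intro s
      have h1 := hasDerivAt_exp_smul_const (𝕂 := ℂ) Q ((s : ℝ) : ℂ)
      have h2 := h1.scomp s Complex.ofRealCLM.hasDerivAt
      simp only [Function.comp_def, Complex.ofRealCLM_apply, Complex.ofReal_one, one_smul] at h2
      exact h2
    -- derivative of G
    have hGd : ∀ s : ℝ, HasDerivAt G
        (exp ((s : ℂ) • P) * P * B * exp ((s : ℂ) • Q)
          + exp ((s : ℂ) • P) * B * (exp ((s : ℂ) • Q) * Q)) s := by
      intro s
      have h1 := aux_hasDerivAt_mul2 mulCLM (hgd s) (hasDerivAt_const s B)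
      have h2 := aux_hasDerivAt_mul2 mulCLM h1 (hhd s)
      have hfun : (fun u : ℝ => mulCLM (mulCLM (exp ((u : ℂ) • P)) B) (exp ((u : ℂ) • Q)))
          = G := by
        funext u
        rw [hGdef]
        simp
      rw [hfun] at h2
      exact h2.congr_deriv (by simp [Matrix.mul_assoc])
    -- continuity and integrability
    have hGcont : Continuous G := continuous_iff_continuousAt.2 fun s => (hGd s).continuousAt
    have hgint : IntegrableOn (fun s : ℝ => ‖B‖ * Real.exp (-δ * s)) (Set.Ici 0) := by
      rw [integrableOn_Ici_iff_integrableOn_Ioi]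
      exact (exp_neg_integrableOn_Ioi 0 hδ).const_mul _
    have hGint : IntegrableOn G (Set.Ici 0) := by
      refine Integrable.mono' hgint hGcont.aestronglyMeasurable.restrict ?_
      exact (ae_restrict_iff' measurableSet_Ici).2 (ae_of_all _ hGbound)
    refine ⟨hGint, ?_, ?_⟩
    -- the Sylvester equation
    · set Φ : Matrix (Fin m) (Fin n) ℂ →L[ℂ] Matrix (Fin m) (Fin n) ℂ :=
        α • (mulCLM Ap - mulCLM.flip Am) with hΦ
      have hΦapp : ∀ X : Matrix (Fin m) (Fin n) ℂ, Φ X = α • (Ap * X - X * Am) := by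
        intro X
        simp [hΦ]
      have hDeriv : ∀ s : ℝ, HasDerivAt G (-(Φ (G s))) s := by
        intro s
        have h1 := hGd s
        have heq : exp ((s : ℂ) • P) * P * B * exp ((s : ℂ) • Q)
            + exp ((s : ℂ) • P) * B * (exp ((s : ℂ) • Q) * Q) = -(Φ (G s)) := by
          simp only [hΦapp, hGdef]
          set e1 := exp ((s : ℂ) • P) with he1
          set e2 := exp ((s : ℂ) • Q) with he2
          have hcomm : Ap * e1 = e1 * Ap :=
            ((((Commute.refl Ap).smul_right (-α)).smul_right ((s : ℂ))).exp_right).eq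
          rw [hP, hQ, smul_sub, neg_sub]
          simp only [Matrix.mul_smul, Matrix.smul_mul]
          rw [← hcomm]
          simp only [Matrix.mul_assoc, neg_smul]
          abel
        rw [heq] at h1
        exact h1
      have hG0 : G 0 = B := by
        rw [hGdef]
        norm_num
      have htend0 : Filter.Tendsto (fun s : ℝ => ‖B‖ * Real.exp (-δ * s)) Filter.atTop (nhds 0) := by
        have h1 : Filter.Tendsto (fun s : ℝ => Real.exp (-δ * s)) Filter.atTop (nhds 0) :=
          Real.tendsto_exp_atBot.comp
            (Filter.tendsto_id.const_mul_atTop_of_neg (neg_neg_iff_pos.2 hδ))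
        simpa using h1.const_mul ‖B‖
      have htend : Filter.Tendsto G Filter.atTop (nhds 0) :=
        squeeze_zero_norm' (Filter.eventually_atTop.2 ⟨0, fun s hs => hGbound s hs⟩) htend0
      have hDint : IntegrableOn (fun s => Φ (G s)) (Set.Ici 0) :=
        Φ.integrable_comp hGint
      have hkey : ∫ s in Set.Ioi (0:ℝ), Φ (G s) = B := by
        have h1 : ∫ s in Set.Ioi (0:ℝ), -(Φ (G s)) = 0 - G 0 :=
          integral_Ioi_of_hasDerivAt_of_tendsto' (fun x _ => hDeriv x)
            ((hDint.mono_set Set.Ioi_subset_Ici_self).neg) htend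
        rw [integral_neg, hG0, zero_sub, neg_inj] at h1
        exact h1
      calc Ap * (α • ∫ s in Set.Ici (0:ℝ), G s) - (α • ∫ s in Set.Ici (0:ℝ), G s) * Am
          = Φ (∫ s in Set.Ici (0:ℝ), G s) := by
            rw [hΦapp, Matrix.mul_smul, Matrix.smul_mul, smul_sub]
        _ = ∫ s in Set.Ici (0:ℝ), Φ (G s) := (ContinuousLinearMap.integral_comp_comm Φ hGint).symm
        _ = ∫ s in Set.Ioi (0:ℝ), Φ (G s) := integral_Ici_eq_integral_Ioi
        _ = B := hkey
    -- the norm bound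
    · have hexpint : ∫ s in Set.Ioi (0:ℝ), Real.exp (-δ * s) = δ⁻¹ := by
        have hderiv : ∀ x ∈ Set.Ici (0:ℝ),
            HasDerivAt (fun s : ℝ => -δ⁻¹ * Real.exp (-δ * s)) (Real.exp (-δ * x)) x := by
          intro x _
          have h1 : HasDerivAt (fun s : ℝ => -δ * s) (-δ) x := by
            simpa using (hasDerivAt_id x).const_mul (-δ)
          have h2 := (Real.hasDerivAt_exp (-δ * x)).comp x h1
          have h3 := h2.const_mul (-δ⁻¹)
          exact h3.congr_deriv (by field_simp)
        have htendexp : Filter.Tendsto (fun s : ℝ => -δ⁻¹ * Real.exp (-δ * s))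
            Filter.atTop (nhds 0) := by
          have h1 : Filter.Tendsto (fun s : ℝ => Real.exp (-δ * s)) Filter.atTop (nhds 0) :=
            Real.tendsto_exp_atBot.comp
              (Filter.tendsto_id.const_mul_atTop_of_neg (neg_neg_iff_pos.2 hδ))
          simpa using h1.const_mul (-δ⁻¹)
        have h := integral_Ioi_of_hasDerivAt_of_tendsto' hderiv
          (exp_neg_integrableOn_Ioi 0 hδ) htendexp
        rw [h]
        norm_num
      have hnormI : ‖∫ s in Set.Ici (0:ℝ), G s‖ ≤ δ⁻¹ * ‖B‖ := by
        have h1 := norm_integral_le_of_norm_le hgint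
          ((ae_restrict_iff' measurableSet_Ici).2 (ae_of_all _ hGbound))
        calc ‖∫ s in Set.Ici (0:ℝ), G s‖ ≤ ∫ s in Set.Ici (0:ℝ), ‖B‖ * Real.exp (-δ * s) := h1
          _ = ‖B‖ * ∫ s in Set.Ioi (0:ℝ), Real.exp (-δ * s) := by
              rw [integral_Ici_eq_integral_Ioi, integral_const_mul]
          _ = δ⁻¹ * ‖B‖ := by rw [hexpint, mul_comm]
      calc ‖α • ∫ s in Set.Ici (0:ℝ), G s‖ = ‖α‖ * ‖∫ s in Set.Ici (0:ℝ), G s‖ := norm_smul _ _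
        _ = ‖∫ s in Set.Ici (0:ℝ), G s‖ := by rw [hα, one_mul]
        _ ≤ δ⁻¹ * ‖B‖ := hnormI
end

section
/- Let H⁺ and H⁻ be complex Hilbert spaces, let A⁺ be a bounded self-adjoint operator on H⁺ with spectrum contained in [δ, ∞) and let A⁻ be a bounded self-adjoint operator on H⁻ with spectrum contained in (−∞, −δ], for some δ > 0. Then for every bounded operator B : H⁻ → H⁺ the function t ↦ exp(−tA⁺) ∘ B ∘ exp(tA⁻) is Bochner integrable on [0,∞), and the bounded operator X = ∫₀^∞ exp(−tA⁺) B exp(tA⁻) dt satisfies A⁺X − XA⁻ = B and ‖X‖ ≤ (2δ)^{−1}‖B‖. -/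
set_option maxHeartbeats 1000000
set_option synthInstance.maxHeartbeats 400000


open NormedSpace MeasureTheory  -- `exp`

section Aux

open scoped Topology

lemma auxBilin {E F G : Type*}
    [NormedAddCommGroup E] [NormedSpace ℂ E] [NormedAddCommGroup F] [NormedSpace ℂ F]
    [NormedAddCommGroup G] [NormedSpace ℂ G] :
    IsBoundedBilinearMap ℝ (fun p : (F →L[ℂ] G) × (E →L[ℂ] F) => p.1.comp p.2) where
  add_left x₁ x₂ y := by ext v; simp
  smul_left c x y := by ext v; simp
  add_right x y₁ y₂ := by ext v; simp
  smul_right c x y := by ext v; simp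
  bound := ⟨1, one_pos, fun x y => by
    simpa using ContinuousLinearMap.opNorm_comp_le x y⟩

lemma auxDeriv {E F G : Type*}
    [NormedAddCommGroup E] [NormedSpace ℂ E] [NormedAddCommGroup F] [NormedSpace ℂ F]
    [NormedAddCommGroup G] [NormedSpace ℂ G]
    {c : ℝ → F →L[ℂ] G} {c' : F →L[ℂ] G} {d : ℝ → E →L[ℂ] F} {d' : E →L[ℂ] F} {t : ℝ}
    (hc : HasDerivAt c c' t) (hd : HasDerivAt d d' t) :
    HasDerivAt (fun y => (c y).comp (d y)) ((c t).comp d' + c'.comp (d t)) t := by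
  have h := (auxBilin.hasFDerivAt (c t, d t)).comp_hasDerivAt t (hc.prodMk hd)
  exact h

lemma auxNormExp {H : Type*} [NormedAddCommGroup H] [InnerProductSpace ℂ H] [CompleteSpace H]
    (A : H →L[ℂ] H) (hA : IsSelfAdjoint A) {δ t : ℝ} (ht : 0 ≤ t)
    (hspec : ∀ x ∈ spectrum ℝ A, δ ≤ x) :
    ‖exp ((-t) • A)‖ ≤ Real.exp (-(t * δ)) := by
  have hA' : IsSelfAdjoint ((-t) • A) := IsSelfAdjoint.smul (star_trivial (-t)) hA
  rw [← CFC.real_exp_eq_normedSpace_exp hA']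
  rw [← cfc_comp_smul (-t) Real.exp A (by fun_prop) hA]
  refine norm_cfc_le (Real.exp_nonneg _) fun x hx => ?_
  rw [Real.norm_eq_abs, abs_of_pos (Real.exp_pos _)]
  apply Real.exp_le_exp.mpr
  have := hspec x hx
  simp only [smul_eq_mul]
  nlinarith

lemma auxIntExp {b : ℝ} (hb : 0 < b) :
    ∫ t in Set.Ioi (0:ℝ), Real.exp (-b * t) = b⁻¹ := by
  have hderiv : ∀ x ∈ Set.Ici (0:ℝ),
      HasDerivAt (fun u : ℝ => -b⁻¹ * Real.exp (-b * u)) (Real.exp (-b * x)) x := by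
    intro x _
    have h1 : HasDerivAt (fun u : ℝ => -b * u) (-b) x := by
      simpa using (hasDerivAt_id x).const_mul (-b)
    have h2 := (Real.hasDerivAt_exp (-b * x)).comp x h1
    have h3 := h2.const_mul (-b⁻¹)
    rw [show Real.exp (-b * x) = -b⁻¹ * (Real.exp (-b * x) * -b) by field_simp]
    exact h3
  have htend : Filter.Tendsto (fun u : ℝ => -b⁻¹ * Real.exp (-b * u)) Filter.atTop (𝓝 0) := by
    have h1 : Filter.Tendsto (fun u : ℝ => -b * u) Filter.atTop Filter.atBot :=
      Filter.tendsto_id.const_mul_atTop_of_neg (by linarith)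
    have h2 := Real.tendsto_exp_atBot.comp h1
    simpa using h2.const_mul (-b⁻¹)
  have h := integral_Ioi_of_hasDerivAt_of_tendsto' hderiv (exp_neg_integrableOn_Ioi 0 hb) htend
  simpa using h

end Aux

/-- Let `Ap` be a bounded self-adjoint operator on the complex Hilbert space
`H⁺` with spectrum in `[δ, ∞)` and `Am` a bounded self-adjoint operator on `H⁻` with spectrum in
`(-∞, -δ]`, `δ > 0`. Then for every bounded `B : H⁻ → H⁺` the function
`t ↦ exp (-t Ap) ∘ B ∘ exp (t Am)` is Bochner integrable on `[0,∞)`, and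
`X = ∫₀^∞ exp (-t Ap) B exp (t Am) dt` satisfies `Ap X - X Am = B` and `‖X‖ ≤ (2δ)⁻¹ ‖B‖`. -/
theorem sylvester_hilbert_selfadjoint {Hp Hm : Type*}
    [NormedAddCommGroup Hp] [InnerProductSpace ℂ Hp] [CompleteSpace Hp]
    [NormedAddCommGroup Hm] [InnerProductSpace ℂ Hm] [CompleteSpace Hm]
    (Ap : Hp →L[ℂ] Hp) (Am : Hm →L[ℂ] Hm)
    (hAp : IsSelfAdjoint Ap) (hAm : IsSelfAdjoint Am) (δ : ℝ) (hδ : 0 < δ)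
    (hspecp : spectrum ℂ Ap ⊆ {z : ℂ | δ ≤ z.re ∧ z.im = 0})
    (hspecm : spectrum ℂ Am ⊆ {z : ℂ | z.re ≤ -δ ∧ z.im = 0})
    (B : Hm →L[ℂ] Hp) :
    IntegrableOn (fun t : ℝ => exp ((-t) • Ap) ∘L B ∘L exp (t • Am)) (Set.Ici 0) ∧
    Ap ∘L (∫ t in Set.Ici (0:ℝ), exp ((-t) • Ap) ∘L B ∘L exp (t • Am))
      - (∫ t in Set.Ici (0:ℝ), exp ((-t) • Ap) ∘L B ∘L exp (t • Am)) ∘L Am = B ∧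
    ‖∫ t in Set.Ici (0:ℝ), exp ((-t) • Ap) ∘L B ∘L exp (t • Am)‖ ≤ (2 * δ)⁻¹ * ‖B‖ := by
  classical
  -- pass to real spectra
  have hreP : ∀ x ∈ spectrum ℝ Ap, δ ≤ x := by
    intro x hx
    have hx' : (algebraMap ℝ ℂ x) ∈ spectrum ℂ Ap := spectrum.algebraMap_mem ℂ hx
    simpa using (hspecp hx').1
  have hreM : ∀ x ∈ spectrum ℝ (-Am), δ ≤ x := by
    intro x hx
    rw [← spectrum.neg_eq, Set.mem_neg] at hx
    have hx' : (algebraMap ℝ ℂ (-x)) ∈ spectrum ℂ Am := spectrum.algebraMap_mem ℂ hx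
    have h := (hspecm hx').1
    simp only [Complex.coe_algebraMap, Complex.ofReal_neg, Complex.neg_re,
      Complex.ofReal_re] at h
    linarith [h]
  set f : ℝ → (Hm →L[ℂ] Hp) := fun t => exp ((-t) • Ap) ∘L B ∘L exp (t • Am) with hfdef
  have hδ2 : (0:ℝ) < 2 * δ := by linarith
  -- norm bounds
  have hnormP : ∀ t : ℝ, 0 ≤ t → ‖exp ((-t) • Ap)‖ ≤ Real.exp (-(t * δ)) :=
    fun t ht => auxNormExp Ap hAp ht hreP
  have hnormM : ∀ t : ℝ, 0 ≤ t → ‖exp (t • Am)‖ ≤ Real.exp (-(t * δ)) := by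
    intro t ht
    have h := auxNormExp (-Am) hAm.neg ht hreM
    rwa [smul_neg, neg_smul, neg_neg] at h
  have hnorm : ∀ t : ℝ, 0 ≤ t → ‖f t‖ ≤ ‖B‖ * Real.exp (-(2 * δ) * t) := by
    intro t ht
    have h1 := hnormP t ht
    have h2 := hnormM t ht
    have hb : ‖B ∘L exp (t • Am)‖ ≤ ‖B‖ * Real.exp (-(t * δ)) :=
      le_trans (ContinuousLinearMap.opNorm_comp_le _ _)
        (mul_le_mul_of_nonneg_left h2 (norm_nonneg B))
    have hee : Real.exp (-(t * δ)) * Real.exp (-(t * δ)) = Real.exp (-(2 * δ) * t) := by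
      rw [← Real.exp_add]; ring_nf
    calc ‖f t‖ ≤ ‖exp ((-t) • Ap)‖ * ‖B ∘L exp (t • Am)‖ :=
          ContinuousLinearMap.opNorm_comp_le _ _
      _ ≤ Real.exp (-(t * δ)) * (‖B‖ * Real.exp (-(t * δ))) :=
          mul_le_mul h1 hb (norm_nonneg _) (Real.exp_nonneg _)
      _ = ‖B‖ * Real.exp (-(2 * δ) * t) := by rw [← hee]; ring
  -- continuity
  have hcontP : Continuous fun t : ℝ => exp ((-t) • Ap) :=
    by letI : NormedAlgebra ℚ (Hp →L[ℂ] Hp) := .restrictScalars ℚ ℂ _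
       exact exp_continuous.comp (continuous_neg.smul continuous_const)
  have hcontM : Continuous fun t : ℝ => exp (t • Am) :=
    by letI : NormedAlgebra ℚ (Hm →L[ℂ] Hm) := .restrictScalars ℚ ℂ _
       exact exp_continuous.comp (continuous_id.smul continuous_const)
  have hcont : Continuous f := by
    exact (auxBilin.continuous).comp
      (hcontP.prodMk ((auxBilin.continuous).comp (continuous_const.prodMk hcontM)))
  -- integrability
  have hgint : IntegrableOn (fun t : ℝ => ‖B‖ * Real.exp (-(2 * δ) * t)) (Set.Ioi 0) :=
    (exp_neg_integrableOn_Ioi 0 hδ2).const_mul ‖B‖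
  have hintIoi : IntegrableOn f (Set.Ioi 0) := by
    refine Integrable.mono' hgint hcont.aestronglyMeasurable.restrict ?_
    filter_upwards [ae_restrict_mem measurableSet_Ioi] with t ht
    exact hnorm t ht.le
  have hintIci : IntegrableOn f (Set.Ici 0) := by
    rwa [integrableOn_Ici_iff_integrableOn_Ioi (f := f) (b := 0)]
  -- the Sylvester operator
  set L : (Hm →L[ℂ] Hp) →L[ℝ] (Hm →L[ℂ] Hp) :=
    ((ContinuousLinearMap.compL ℂ Hm Hp Hp Ap).restrictScalars ℝ) -
      (((ContinuousLinearMap.compL ℂ Hm Hm Hp).flip Am).restrictScalars ℝ) with hLdef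
  have hL : ∀ X : Hm →L[ℂ] Hp, L X = Ap ∘L X - X ∘L Am := by
    intro X
    simp [hLdef]
  -- derivative
  have hasd : ∀ t : ℝ, HasDerivAt f (-(L (f t))) t := by
    intro t
    have hg1 : HasDerivAt (fun u : ℝ => exp (u • Ap)) (exp ((-t) • Ap) * Ap) (-t) :=
      hasDerivAt_exp_smul_const Ap (-t)
    have hneg : HasDerivAt (fun u : ℝ => -u) (-1) t := (hasDerivAt_id t).neg
    have hg1' : HasDerivAt (fun u : ℝ => exp ((-u) • Ap))
        ((-1 : ℝ) • (exp ((-t) • Ap) * Ap)) t := by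
      have h := HasDerivAt.scomp (x := t) hg1 hneg
      simpa [Function.comp_def] using h
    have hg2 : HasDerivAt (fun u : ℝ => exp (u • Am)) (exp (t • Am) * Am) t :=
      hasDerivAt_exp_smul_const Am t
    have hh : HasDerivAt (fun u : ℝ => B ∘L exp (u • Am))
        (B ∘L (exp (t • Am) * Am)) t := by
      have h := auxDeriv (hasDerivAt_const t B) hg2
      simpa using h
    have hmain := auxDeriv hg1' hh
    have hcommute : Commute Ap (exp ((-t) • Ap)) :=
      (((Commute.refl Ap).smul_right (-t)).exp_right)
    have hcomm : Ap ∘L exp ((-t) • Ap) = exp ((-t) • Ap) ∘L Ap := hcommute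
    convert hmain using 1
    rw [hL]
    have hcv : ∀ w, Ap (exp ((-t) • Ap) w) = exp ((-t) • Ap) (Ap w) :=
      fun w => DFunLike.congr_fun hcomm w
    ext v
    simp only [hfdef, ContinuousLinearMap.coe_comp', Function.comp_apply,
      ContinuousLinearMap.sub_apply, ContinuousLinearMap.neg_apply,
      ContinuousLinearMap.add_apply, ContinuousLinearMap.smul_apply,
      ContinuousLinearMap.mul_apply, neg_one_smul]
    rw [hcv]
    abel
  -- tendsto 0 at infinity
  have htend : Filter.Tendsto f Filter.atTop (nhds 0) := by
    have hev : ∀ᶠ t in Filter.atTop, ‖f t‖ ≤ ‖B‖ * Real.exp (-(2 * δ) * t) := by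
      filter_upwards [Filter.eventually_ge_atTop 0] with t ht using hnorm t ht
    have h1 : Filter.Tendsto (fun t : ℝ => -(2 * δ) * t) Filter.atTop Filter.atBot :=
      Filter.tendsto_id.const_mul_atTop_of_neg (by linarith)
    have h2 : Filter.Tendsto (fun t : ℝ => ‖B‖ * Real.exp (-(2 * δ) * t))
        Filter.atTop (nhds 0) := by
      simpa using (Real.tendsto_exp_atBot.comp h1).const_mul ‖B‖
    exact squeeze_zero_norm' hev h2
  have hf0 : f 0 = B := by
    ext v
    simp [hfdef]
  have hint' : IntegrableOn (fun t => -(L (f t))) (Set.Ioi 0) := (L.integrable_comp hintIoi).neg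
  have hFTC : ∫ t in Set.Ioi (0:ℝ), -(L (f t)) = 0 - f 0 :=
    integral_Ioi_of_hasDerivAt_of_tendsto hcont.continuousWithinAt
      (fun x _ => hasd x) hint' htend
  have hLX : L (∫ t in Set.Ioi (0:ℝ), f t) = B := by
    rw [integral_neg, L.integral_comp_comm hintIoi, hf0, zero_sub] at hFTC
    exact neg_injective hFTC
  refine ⟨hintIci, ?_, ?_⟩
  · rw [integral_Ici_eq_integral_Ioi, ← hL]
    exact hLX
  · rw [integral_Ici_eq_integral_Ioi]
    have hb := norm_integral_le_of_norm_le hgint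
      ((ae_restrict_iff' measurableSet_Ioi).mpr (ae_of_all _ fun t ht => hnorm t ht.le))
    calc ‖∫ t in Set.Ioi (0:ℝ), f t‖ ≤ ∫ t in Set.Ioi (0:ℝ), ‖B‖ * Real.exp (-(2 * δ) * t) := hb
      _ = (2 * δ)⁻¹ * ‖B‖ := by rw [integral_const_mul, auxIntExp hδ2]; ring
end

section
/- Let H⁺, H⁻ be complex Banach spaces, and let A⁺ be a bounded operator on H⁺ with Re λ > 0 for every λ in its spectrum and A⁻ a bounded operator on H⁻ with Re μ < 0 for every μ in its spectrum. Let A : ℝ → B(H⁺ × H⁻) be a family of bounded operators on H⁺ × H⁻ having a full asymptotic expansion with bounded coefficients (A_k)_{k∈ℕ} as ρ → 0, whose leading term A₀ is the block-diagonal operator (x⁺, x⁻) ↦ (A⁺x⁺, A⁻x⁻). Then for every N ∈ ℕ there exist bounded operators M₀, …, M_{N−1} on H⁺ × H⁻ with M₀ = I, and bounded operators Λ₀, …, Λ_{N−1} on H⁺ × H⁻ each of which is block-diagonal (i.e. maps H⁺ × {0} into H⁺ × {0} and {0} × H⁻ into {0} × H⁻), such that ‖A(ρ)·(Σ_{k=0}^{N−1}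 ρ^k M_k) − (Σ_{k=0}^{N−1} ρ^k M_k)·(Σ_{k=0}^{N−1} ρ^k Λ_k)‖ = O(|ρ|^N) as ρ → 0. -/
open Filter Asymptotics
open ContinuousLinearMap

/-- If `u` and `v` commute in a complex Banach algebra and `u - v` is not a unit,
then their spectra intersect. -/
theorem commuting_spectrum_aux {A : Type*} [NormedRing A] [NormedAlgebra ℂ A] [CompleteSpace A]
    {u v : A} (huv : u * v = v * u) (h : ¬ IsUnit (u - v)) :
    ∃ z : ℂ, z ∈ spectrum ℂ u ∧ z ∈ spectrum ℂ v := by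
  classical
  set C : Subalgebra ℂ A := Subalgebra.centralizer ℂ {u, v} with hC
  set B : Subalgebra ℂ A := Subalgebra.centralizer ℂ (C : Set A) with hB
  have hu : u ∈ B := by
    rw [hB, Subalgebra.mem_centralizer_iff]
    intro g hg
    rw [SetLike.mem_coe, hC, Subalgebra.mem_centralizer_iff] at hg
    exact (hg u (by simp)).symm
  have hv : v ∈ B := by
    rw [hB, Subalgebra.mem_centralizer_iff]
    intro g hg
    rw [SetLike.mem_coe, hC, Subalgebra.mem_centralizer_iff] at hg
    exact (hg v (by simp)).symm
  have hsub : ({u, v} : Set A) ⊆ (C : Set A) := by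
    intro x hx
    rcases hx with rfl | hx
    · rw [SetLike.mem_coe, hC, Subalgebra.mem_centralizer_iff]
      rintro g (rfl | hg)
      · rfl
      · simp only [Set.mem_singleton_iff] at hg; subst hg; exact huv.symm
    · simp only [Set.mem_singleton_iff] at hx; subst hx
      rw [SetLike.mem_coe, hC, Subalgebra.mem_centralizer_iff]
      rintro g (rfl | hg)
      · exact huv
      · simp only [Set.mem_singleton_iff] at hg; subst hg; rfl
  have hBC : B ≤ C := by
    rw [hB, hC]
    exact Subalgebra.centralizer_le ℂ _ _ hsub
  -- commutativity of B
  have hcomm : ∀ x y : B, x * y = y * x := by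
    rintro ⟨x, hx⟩ ⟨y, hy⟩
    have hyC : y ∈ C := hBC hy
    rw [hB, Subalgebra.mem_centralizer_iff] at hx
    ext
    exact (hx y hyC).symm
  -- closedness of B
  have hclosed : IsClosed (B : Set A) := by
    rw [hB, Subalgebra.coe_centralizer]
    have : ((C : Set A).centralizer) = ⋂ g ∈ (C : Set A), {x | g * x = x * g} := by
      ext x; simp [Set.mem_centralizer_iff]
    rw [this]
    exact isClosed_biInter fun g _ => isClosed_eq (continuous_const.mul continuous_id)
      (continuous_id.mul continuous_const)
  -- inverse closedness
  have hinv : ∀ x : A, x ∈ B → ∀ w : A, x * w = 1 → w * x = 1 → w ∈ B := by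
    intro x hx w hw1 hw2
    rw [hB, Subalgebra.mem_centralizer_iff]
    intro g hgC
    rw [hB, Subalgebra.mem_centralizer_iff] at hx
    have hgx : g * x = x * g := hx g hgC
    calc g * w = w * x * (g * w) := by rw [hw2, one_mul]
    _ = w * (x * g) * w := by simp [mul_assoc]
    _ = w * (g * x) * w := by rw [hgx]
    _ = w * g * (x * w) := by simp [mul_assoc]
    _ = w * g := by rw [hw1, mul_one]
  haveI : CompleteSpace B := hclosed.completeSpace_coe
  letI : NormedCommRing B := { (inferInstance : NormedRing B) with mul_comm := hcomm }
  have hnu : ¬ IsUnit (⟨u - v, sub_mem hu hv⟩ : B) := by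
    intro hun
    exact h (hun.map B.val)
  obtain ⟨f, hf⟩ := WeakDual.CharacterSpace.exists_apply_eq_zero hnu
  have hsubeq : (⟨u - v, sub_mem hu hv⟩ : B) = ⟨u, hu⟩ - ⟨v, hv⟩ := rfl
  rw [hsubeq, map_sub, sub_eq_zero] at hf
  refine ⟨f ⟨u, hu⟩, ?_, ?_⟩
  · have hm : f ⟨u, hu⟩ ∈ spectrum ℂ (⟨u, hu⟩ : B) :=
      WeakDual.CharacterSpace.apply_mem_spectrum f _
    -- transfer to A
    by_contra hzu
    rw [spectrum.mem_iff, not_not] at hzu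
    apply spectrum.notMem_iff.mpr ?_ hm
    obtain ⟨x, hxval⟩ := hzu
    have hx1 : (algebraMap ℂ A (f ⟨u, hu⟩) - u) * ↑x⁻¹ = 1 := by
      rw [← hxval]; exact x.mul_inv
    have hx2 : (↑x⁻¹ : A) * (algebraMap ℂ A (f ⟨u, hu⟩) - u) = 1 := by
      rw [← hxval]; exact x.inv_mul
    have hmem : algebraMap ℂ A (f ⟨u, hu⟩) - u ∈ B := sub_mem (algebraMap_mem B _) hu
    have hwmem : (↑x⁻¹ : A) ∈ B := hinv _ hmem _ hx1 hx2
    exact ⟨⟨⟨_, sub_mem (algebraMap_mem B _) hu⟩, ⟨_, hwmem⟩,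
      Subtype.ext hx1, Subtype.ext hx2⟩, rfl⟩
  · have hm : f ⟨v, hv⟩ ∈ spectrum ℂ (⟨v, hv⟩ : B) :=
      WeakDual.CharacterSpace.apply_mem_spectrum f _
    rw [hf]
    by_contra hzv
    rw [spectrum.mem_iff, not_not] at hzv
    apply spectrum.notMem_iff.mpr ?_ hm
    obtain ⟨x, hxval⟩ := hzv
    have hx1 : (algebraMap ℂ A (f ⟨v, hv⟩) - v) * ↑x⁻¹ = 1 := by
      rw [← hxval]; exact x.mul_inv
    have hx2 : (↑x⁻¹ : A) * (algebraMap ℂ A (f ⟨v, hv⟩) - v) = 1 := by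
      rw [← hxval]; exact x.inv_mul
    have hmem : algebraMap ℂ A (f ⟨v, hv⟩) - v ∈ B := sub_mem (algebraMap_mem B _) hv
    have hwmem : (↑x⁻¹ : A) ∈ B := hinv _ hmem _ hx1 hx2
    exact ⟨⟨⟨_, sub_mem (algebraMap_mem B _) hv⟩, ⟨_, hwmem⟩,
      Subtype.ext hx1, Subtype.ext hx2⟩, rfl⟩

/-- Solvability of the Sylvester equation for operators with disjoint spectra. -/
theorem sylvester_solve {E F : Type*}
    [NormedAddCommGroup E] [NormedSpace ℂ E] [CompleteSpace E]
    [NormedAddCommGroup F] [NormedSpace ℂ F] [CompleteSpace F]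
    (a : E →L[ℂ] E) (b : F →L[ℂ] F)
    (hd : ∀ z ∈ spectrum ℂ a, z ∉ spectrum ℂ b) (c : F →L[ℂ] E) :
    ∃ x : F →L[ℂ] E, a.comp x - x.comp b = c := by
  let l : (F →L[ℂ] E) →L[ℂ] (F →L[ℂ] E) := (ContinuousLinearMap.compL ℂ F E E) a
  let r : (F →L[ℂ] E) →L[ℂ] (F →L[ℂ] E) := (ContinuousLinearMap.compL ℂ F F E).flip b
  have hl : ∀ x : F →L[ℂ] E, l x = a.comp x := fun x => rfl
  have hr : ∀ x : F →L[ℂ] E, r x = x.comp b := fun x => rfl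
  have hcomm : l * r = r * l := by
    ext x m
    simp [l, r, ContinuousLinearMap.mul_apply]
  have hunit : IsUnit (l - r) := by
    by_contra hnu
    obtain ⟨z, hzl, hzr⟩ := commuting_spectrum_aux (A := (F →L[ℂ] E) →L[ℂ] (F →L[ℂ] E)) hcomm hnu
    -- z ∈ spectrum a
    have hza : z ∈ spectrum ℂ a := by
      by_contra hza
      rw [spectrum.mem_iff, not_not] at hza
      obtain ⟨q, hq⟩ := hza
      apply spectrum.notMem_iff.mpr ?_ hzl
      have hqv : ∀ v : E, (↑q : E →L[ℂ] E) v = z • v - a v := by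
        intro v
        rw [hq]
        simp [Algebra.algebraMap_eq_smul_one]
      have hq1 : ∀ v : E, (↑q : E →L[ℂ] E) ((↑q⁻¹ : E →L[ℂ] E) v) = v := by
        intro v
        have h := DFunLike.congr_fun q.mul_inv v
        rwa [ContinuousLinearMap.mul_apply, ContinuousLinearMap.one_apply] at h
      have hq2 : ∀ v : E, (↑q⁻¹ : E →L[ℂ] E) ((↑q : E →L[ℂ] E) v) = v := by
        intro v
        have h := DFunLike.congr_fun q.inv_mul v
        rwa [ContinuousLinearMap.mul_apply, ContinuousLinearMap.one_apply] at h
      refine ⟨⟨algebraMap ℂ _ z - l, (ContinuousLinearMap.compL ℂ F E E) ↑q⁻¹, ?_, ?_⟩, rfl⟩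
      · ext x m
        simp only [ContinuousLinearMap.mul_apply, ContinuousLinearMap.one_apply,
          ContinuousLinearMap.sub_apply, Algebra.algebraMap_eq_smul_one,
          ContinuousLinearMap.smul_apply, ContinuousLinearMap.compL_apply,
          ContinuousLinearMap.coe_comp', Function.comp_apply, hl]
        have := hq1 (x m)
        rw [hqv] at this
        exact this
      · ext x m
        simp only [ContinuousLinearMap.mul_apply, ContinuousLinearMap.one_apply,
          ContinuousLinearMap.sub_apply, Algebra.algebraMap_eq_smul_one,
          ContinuousLinearMap.smul_apply, ContinuousLinearMap.compL_apply,
          ContinuousLinearMap.coe_comp', Function.comp_apply, hl]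
        rw [← hqv (x m), hq2]
    -- z ∈ spectrum b
    have hzb : z ∈ spectrum ℂ b := by
      by_contra hzb
      rw [spectrum.mem_iff, not_not] at hzb
      obtain ⟨q, hq⟩ := hzb
      apply spectrum.notMem_iff.mpr ?_ hzr
      have hqv : ∀ v : F, (↑q : F →L[ℂ] F) v = z • v - b v := by
        intro v
        rw [hq]
        simp [Algebra.algebraMap_eq_smul_one]
      have hq1 : ∀ v : F, (↑q : F →L[ℂ] F) ((↑q⁻¹ : F →L[ℂ] F) v) = v := by
        intro v
        have h := DFunLike.congr_fun q.mul_inv v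
        rwa [ContinuousLinearMap.mul_apply, ContinuousLinearMap.one_apply] at h
      have hq2 : ∀ v : F, (↑q⁻¹ : F →L[ℂ] F) ((↑q : F →L[ℂ] F) v) = v := by
        intro v
        have h := DFunLike.congr_fun q.inv_mul v
        rwa [ContinuousLinearMap.mul_apply, ContinuousLinearMap.one_apply] at h
      refine ⟨⟨algebraMap ℂ _ z - r, (ContinuousLinearMap.compL ℂ F F E).flip ↑q⁻¹, ?_, ?_⟩, rfl⟩
      · ext x m
        simp only [ContinuousLinearMap.mul_apply, ContinuousLinearMap.one_apply,
          ContinuousLinearMap.sub_apply, Algebra.algebraMap_eq_smul_one,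
          ContinuousLinearMap.smul_apply, ContinuousLinearMap.compL_apply,
          ContinuousLinearMap.flip_apply, ContinuousLinearMap.coe_comp',
          Function.comp_apply, hr]
        conv_rhs => rw [← hq2 m, hqv]
        simp [map_sub, map_smul]
      · ext x m
        simp only [ContinuousLinearMap.mul_apply, ContinuousLinearMap.one_apply,
          ContinuousLinearMap.sub_apply, Algebra.algebraMap_eq_smul_one,
          ContinuousLinearMap.smul_apply, ContinuousLinearMap.compL_apply,
          ContinuousLinearMap.flip_apply, ContinuousLinearMap.coe_comp',
          Function.comp_apply, hr]
        conv_rhs => rw [← hq1 m, hqv]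
        simp [map_sub, map_smul]
    exact hd z hza hzb
  obtain ⟨s, hs⟩ := hunit
  refine ⟨s.inv c, ?_⟩
  have h1 : (l - r) * s.inv = 1 := by rw [← hs]; exact s.mul_inv
  have := congrArg (fun T : (F →L[ℂ] E) →L[ℂ] (F →L[ℂ] E) => T c) h1
  simp only [ContinuousLinearMap.mul_apply, ContinuousLinearMap.one_apply] at this
  rw [ContinuousLinearMap.sub_apply, hl, hr] at this
  exact this

section Blocks
variable {Hp Hm : Type*}
    [NormedAddCommGroup Hp] [NormedSpace ℂ Hp]
    [NormedAddCommGroup Hm] [NormedSpace ℂ Hm]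

/-- The block off-diagonal operator built from `X : Hm →L Hp` and `Y : Hp →L Hm`. -/
noncomputable def offd (X : Hm →L[ℂ] Hp) (Y : Hp →L[ℂ] Hm) : Hp × Hm →L[ℂ] Hp × Hm :=
  (X.comp (snd ℂ Hp Hm)).prod (Y.comp (fst ℂ Hp Hm))

theorem offd_apply (X : Hm →L[ℂ] Hp) (Y : Hp →L[ℂ] Hm) (v : Hp × Hm) :
    offd X Y v = (X v.2, Y v.1) := rfl

theorem blocks_decomp (T : Hp × Hm →L[ℂ] Hp × Hm) :
    T = (((fst ℂ Hp Hm).comp (T.comp (inl ℂ Hp Hm))).prodMap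
          ((snd ℂ Hp Hm).comp (T.comp (inr ℂ Hp Hm)))) +
        offd ((fst ℂ Hp Hm).comp (T.comp (inr ℂ Hp Hm)))
          ((snd ℂ Hp Hm).comp (T.comp (inl ℂ Hp Hm))) := by
  refine ContinuousLinearMap.ext fun v => ?_
  have hv : v = (v.1, 0) + (0, v.2) := by simp
  refine Prod.ext ?_ ?_ <;>
  · conv_lhs => rw [hv, map_add]
    simp [offd_apply, Prod.map, add_comm]

theorem blocks_commut (Ap : Hp →L[ℂ] Hp) (Am : Hm →L[ℂ] Hm) (X : Hm →L[ℂ] Hp)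
    (Y : Hp →L[ℂ] Hm) :
    Ap.prodMap Am * offd X Y - offd X Y * Ap.prodMap Am =
      offd (Ap.comp X - X.comp Am) (Am.comp Y - Y.comp Ap) := by
  refine ContinuousLinearMap.ext fun v => ?_
  refine Prod.ext ?_ ?_ <;>
    simp [ContinuousLinearMap.mul_apply, offd_apply, Prod.map]

end Blocks

set_option maxHeartbeats 2000000 in
/-- block-diagonalisation for bounded operators, Section 2 of the paper.
Let `Ap : B(H⁺)` have spectrum with positive real part and `Am : B(H⁻)` spectrum with negative
real part, and let `A(ρ)` be a family of bounded operators on `H⁺ × H⁻` with a full asymptotic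
expansion whose leading term is the block-diagonal operator `(x⁺, x⁻) ↦ (Ap x⁺, Am x⁻)`.  Then
for every `N` there are bounded operators `M₀ = I, M₁, …, M_{N-1}` and block-diagonal bounded
operators `Λ₀, …, Λ_{N-1}` with
`A(ρ)·∑ ρ^k M_k - (∑ ρ^k M_k)·(∑ ρ^k Λ_k) = O(|ρ|^N)` as `ρ → 0`. -/
theorem block_diagonalisation_bounded_operators {Hp Hm : Type*}
    [NormedAddCommGroup Hp] [NormedSpace ℂ Hp] [CompleteSpace Hp]
    [NormedAddCommGroup Hm] [NormedSpace ℂ Hm] [CompleteSpace Hm]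
    (Ap : Hp →L[ℂ] Hp) (Am : Hm →L[ℂ] Hm)
    (hAp : ∀ lam ∈ spectrum ℂ Ap, 0 < lam.re)
    (hAm : ∀ mu ∈ spectrum ℂ Am, mu.re < 0)
    (A : ℝ → (Hp × Hm →L[ℂ] Hp × Hm)) (Ak : ℕ → (Hp × Hm →L[ℂ] Hp × Hm))
    (hexp : ∀ N : ℕ, ∃ C ε : ℝ, 0 < C ∧ 0 < ε ∧ ∀ ρ : ℝ, |ρ| ≤ ε →
      ‖A ρ - ∑ k ∈ Finset.range N, (ρ : ℂ) ^ k • Ak k‖ ≤ C * |ρ| ^ N)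
    (hA0 : Ak 0 = Ap.prodMap Am) (N : ℕ) :
    ∃ M Λ : ℕ → (Hp × Hm →L[ℂ] Hp × Hm),
      M 0 = 1 ∧
      (∀ k < N, (∀ x : Hp, (Λ k (x, 0)).2 = 0) ∧ (∀ y : Hm, (Λ k (0, y)).1 = 0)) ∧
      (fun ρ : ℝ =>
          A ρ * (∑ k ∈ Finset.range N, (ρ : ℂ) ^ k • M k)
            - (∑ k ∈ Finset.range N, (ρ : ℂ) ^ k • M k)
              * (∑ k ∈ Finset.range N, (ρ : ℂ) ^ k • Λ k))
        =O[nhds 0] fun ρ : ℝ => |ρ| ^ N := by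
  classical
  set A0 : (Hp × Hm →L[ℂ] Hp × Hm) := Ap.prodMap Am with hA0def
  have hdisj1 : ∀ z ∈ spectrum ℂ Ap, z ∉ spectrum ℂ Am := fun z hz hz' =>
    absurd (hAm z hz') (not_lt.mpr (le_of_lt (hAp z hz)))
  have hdisj2 : ∀ z ∈ spectrum ℂ Am, z ∉ spectrum ℂ Ap := fun z hz hz' =>
    absurd (hAm z hz) (not_lt.mpr (le_of_lt (hAp z hz')))
  -- the recursive construction
  have main : ∀ n : ℕ, ∃ M L : ℕ → (Hp × Hm →L[ℂ] Hp × Hm), M 0 = 1 ∧ L 0 = A0 ∧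
      (∀ k, (∀ x : Hp, (L k (x, 0)).2 = 0) ∧ (∀ y : Hm, (L k (0, y)).1 = 0)) ∧
      (∀ m < n, ∑ k ∈ Finset.range (m+1),
        (Ak k * M (m - k) - M k * L (m - k)) = 0) := by
    intro n
    induction n with
    | zero =>
      refine ⟨fun _ => 1, fun _ => A0, rfl, rfl, fun k => ⟨fun x => ?_, fun y => ?_⟩,
        fun m hm => absurd hm (Nat.not_lt_zero m)⟩
      · exact map_zero Am
      · exact map_zero Ap
    | succ n ih =>
      obtain ⟨M, L, hM0, hL0, hLdiag, hident⟩ := ih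
      rcases Nat.eq_zero_or_pos n with rfl | hn
      · refine ⟨M, L, hM0, hL0, hLdiag, fun m hm => ?_⟩
        interval_cases m
        simp [hM0, hL0, hA0]
      · -- n ≥ 1 : update at index n
        set G : (Hp × Hm →L[ℂ] Hp × Hm) := ∑ k ∈ Finset.Ico 1 n, (Ak k * M (n - k) - M k * L (n - k)) with hG
        set D : (Hp × Hm →L[ℂ] Hp × Hm) := -(Ak n + G) with hD
        set D11 := (fst ℂ Hp Hm).comp (D.comp (inl ℂ Hp Hm)) with hD11
        set D12 := (fst ℂ Hp Hm).comp (D.comp (inr ℂ Hp Hm)) with hD12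
        set D21 := (snd ℂ Hp Hm).comp (D.comp (inl ℂ Hp Hm)) with hD21
        set D22 := (snd ℂ Hp Hm).comp (D.comp (inr ℂ Hp Hm)) with hD22
        obtain ⟨X, hX⟩ := sylvester_solve Ap Am hdisj1 D12
        obtain ⟨Y, hY⟩ := sylvester_solve Am Ap hdisj2 D21
        set Mn : (Hp × Hm →L[ℂ] Hp × Hm) := offd X Y with hMn
        set Ln : (Hp × Hm →L[ℂ] Hp × Hm) := -(D11.prodMap D22) with hLn
        refine ⟨Function.update M n Mn, Function.update L n Ln, ?_, ?_, ?_, ?_⟩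
        · rw [Function.update_of_ne (by omega)]; exact hM0
        · rw [Function.update_of_ne (by omega)]; exact hL0
        · intro k
          rcases eq_or_ne k n with rfl | hk
          · constructor
            · intro x
              simp [Function.update_self, hLn, hD22, Prod.mk_zero_zero]
            · intro y
              simp [Function.update_self, hLn, hD11, Prod.mk_zero_zero]
          · rw [Function.update_of_ne hk]; exact hLdiag k
        · intro m hm
          rcases Nat.lt_succ_iff_lt_or_eq.mp hm with hm' | rfl
          · rw [← hident m hm']
            apply Finset.sum_congr rfl
            intro k hk
            rw [Finset.mem_range] at hk
            rw [Function.update_of_ne (by omega), Function.update_of_ne (by omega),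
              Function.update_of_ne (by omega)]
          · -- the identity at m = n
            have hsplit : Finset.range (m+1) = insert 0 (insert m (Finset.Ico 1 m)) := by
              ext k
              simp only [Finset.mem_range, Finset.mem_insert, Finset.mem_Ico]
              omega
            rw [hsplit, Finset.sum_insert (by simp; omega),
              Finset.sum_insert (by simp)]
            have hmid : ∑ k ∈ Finset.Ico 1 m,
                (Ak k * Function.update M m Mn (m - k) -
                  Function.update M m Mn k * Function.update L m Ln (m - k)) = G := by
              rw [hG]
              apply Finset.sum_congr rfl
              intro k hk
              rw [Finset.mem_Ico] at hk
              rw [Function.update_of_ne (by omega), Function.update_of_ne (by omega),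
                Function.update_of_ne (by omega)]
            rw [hmid]
            rw [show m - m = 0 from Nat.sub_self m]
            simp only [Nat.sub_zero, Function.update_self]
            rw [Function.update_of_ne (show (0:ℕ) ≠ m by omega),
              Function.update_of_ne (show (0:ℕ) ≠ m by omega), hM0, hL0, hA0]
            -- goal: (A0 * Mn - 1 * Ln) + ((Ak n * 1 - Mn * A0) + G) = 0
            have h1 : A0 * Mn = (D - D11.prodMap D22) + Mn * A0 := by
              have := blocks_commut Ap Am X Y
              rw [← hA0def] at this
              rw [← hMn, hX, hY] at this
              have h2 : offd D12 D21 = D - D11.prodMap D22 := by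
                conv_rhs => rw [blocks_decomp D]
                rw [← hD11, ← hD12, ← hD21, ← hD22]
                abel
              rw [h2] at this
              rw [← this]
              abel
            rw [h1, hLn, hD]
            simp only [one_mul, mul_one]
            abel
  obtain ⟨M, L, hM0, hL0, hLdiag, hident⟩ := main N
  refine ⟨M, L, hM0, fun k _ => hLdiag k, ?_⟩
  -- the asymptotic estimate
  obtain ⟨C, ε, hC, hε, hbound⟩ := hexp N
  set K₁ : ℝ := ∑ k ∈ Finset.range N, ‖M k‖ with hK₁
  set Dd : ℕ × ℕ → (Hp × Hm →L[ℂ] Hp × Hm) := fun p => Ak p.1 * M p.2 - M p.1 * L p.2 with hDd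
  set K₂ : ℝ := ∑ p ∈ Finset.range N ×ˢ Finset.range N, ‖Dd p‖ with hK₂
  rw [isBigO_iff]
  refine ⟨C * K₁ + K₂, ?_⟩
  have hδ : (0:ℝ) < min ε 1 := lt_min hε one_pos
  filter_upwards [eventually_abs_sub_lt 0 hδ] with ρ hρ
  rw [sub_zero] at hρ
  have hρε : |ρ| ≤ ε := le_trans hρ.le (min_le_left _ _)
  have hρ1 : |ρ| ≤ 1 := le_trans hρ.le (min_le_right _ _)
  set P : (Hp × Hm →L[ℂ] Hp × Hm) := ∑ k ∈ Finset.range N, (ρ : ℂ) ^ k • M k with hP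
  set Q : (Hp × Hm →L[ℂ] Hp × Hm) := ∑ k ∈ Finset.range N, (ρ : ℂ) ^ k • L k with hQ
  set S : (Hp × Hm →L[ℂ] Hp × Hm) := ∑ k ∈ Finset.range N, (ρ : ℂ) ^ k • Ak k with hS
  have hPnorm : ‖P‖ ≤ K₁ := by
    refine le_trans (norm_sum_le _ _) (Finset.sum_le_sum fun k _ => ?_)
    calc ‖(ρ:ℂ) ^ k • M k‖ = ‖(ρ:ℂ) ^ k‖ * ‖M k‖ := by exact norm_smul ((ρ:ℂ) ^ k) (M k)
      _ = |ρ| ^ k * ‖M k‖ := by rw [norm_pow, Complex.norm_real, Real.norm_eq_abs]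
      _ ≤ ‖M k‖ := mul_le_of_le_one_left (norm_nonneg _) (pow_le_one₀ (abs_nonneg _) hρ1)
  have hsplit2 : A ρ * P - P * Q = (A ρ - S) * P + (S * P - P * Q) := by
    rw [sub_mul]; abel
  have hterm2 : S * P - P * Q =
      ∑ p ∈ (Finset.range N ×ˢ Finset.range N).filter (fun p => ¬ p.1 + p.2 < N),
        (ρ : ℂ) ^ (p.1 + p.2) • Dd p := by
    have e1 : S * P - P * Q = ∑ p ∈ Finset.range N ×ˢ Finset.range N,
        (ρ : ℂ) ^ (p.1 + p.2) • Dd p := by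
      rw [Finset.sum_product' (s := Finset.range N) (t := Finset.range N)
        (f := fun i j => (ρ : ℂ) ^ (i + j) • Dd (i, j))]
      rw [hS, hP, hQ, Finset.sum_mul_sum, Finset.sum_mul_sum, ← Finset.sum_sub_distrib]
      apply Finset.sum_congr rfl
      intro i _
      rw [← Finset.sum_sub_distrib]
      apply Finset.sum_congr rfl
      intro j _
      simp only [hDd, smul_mul_smul_comm, ← pow_add]
      rw [smul_sub]
    rw [e1, ← Finset.sum_filter_add_sum_filter_not
      (Finset.range N ×ˢ Finset.range N) (fun p => p.1 + p.2 < N)]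
    have e2 : ∑ p ∈ (Finset.range N ×ˢ Finset.range N).filter (fun p => p.1 + p.2 < N),
        (ρ : ℂ) ^ (p.1 + p.2) • Dd p = 0 := by
      have hset : (Finset.range N ×ˢ Finset.range N).filter (fun p => p.1 + p.2 < N) =
          (Finset.range N).biUnion (fun n => Finset.HasAntidiagonal.antidiagonal n) := by
        ext p
        simp only [Finset.mem_filter, Finset.mem_product, Finset.mem_range,
          Finset.mem_biUnion, Finset.HasAntidiagonal.mem_antidiagonal]
        constructor
        · rintro ⟨⟨h1, h2⟩, h3⟩
          exact ⟨p.1 + p.2, h3, rfl⟩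
        · rintro ⟨a, ha, rfl⟩
          omega
      rw [hset, Finset.sum_biUnion]
      · apply Finset.sum_eq_zero
        intro n hn
        rw [Finset.mem_range] at hn
        have : ∑ p ∈ Finset.HasAntidiagonal.antidiagonal n, (ρ : ℂ) ^ (p.1 + p.2) • Dd p =
            (ρ : ℂ) ^ n • ∑ p ∈ Finset.HasAntidiagonal.antidiagonal n, Dd p := by
          rw [Finset.smul_sum]
          apply Finset.sum_congr rfl
          intro p hp
          rw [Finset.HasAntidiagonal.mem_antidiagonal.mp hp]
        rw [this]
        have hz : ∑ p ∈ Finset.HasAntidiagonal.antidiagonal n, Dd p = 0 := by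
          rw [Finset.Nat.sum_antidiagonal_eq_sum_range_succ_mk]
          exact hident n hn
        rw [hz, smul_zero]
      · intro a _ b _ hab
        apply Finset.disjoint_left.mpr
        intro p hpa hpb
        exact hab (by rw [← Finset.HasAntidiagonal.mem_antidiagonal.mp hpa,
          ← Finset.HasAntidiagonal.mem_antidiagonal.mp hpb])
    rw [e2, zero_add]
  have hterm2norm : ‖S * P - P * Q‖ ≤ K₂ * |ρ| ^ N := by
    rw [hterm2]
    refine le_trans (norm_sum_le _ _) ?_
    have step : ∀ p ∈ (Finset.range N ×ˢ Finset.range N).filter (fun p => ¬ p.1 + p.2 < N),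
        ‖(ρ : ℂ) ^ (p.1 + p.2) • Dd p‖ ≤ ‖Dd p‖ * |ρ| ^ N := by
      intro p hp
      rw [Finset.mem_filter, not_lt] at hp
      calc ‖(ρ:ℂ) ^ (p.1 + p.2) • Dd p‖ = ‖(ρ:ℂ) ^ (p.1 + p.2)‖ * ‖Dd p‖ := by
            exact norm_smul ((ρ:ℂ) ^ (p.1 + p.2)) (Dd p)
        _ = |ρ| ^ (p.1 + p.2) * ‖Dd p‖ := by
            rw [norm_pow, Complex.norm_real, Real.norm_eq_abs]
        _ ≤ |ρ| ^ N * ‖Dd p‖ := mul_le_mul_of_nonneg_right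
            (pow_le_pow_of_le_one (abs_nonneg _) hρ1 hp.2) (norm_nonneg _)
        _ = ‖Dd p‖ * |ρ| ^ N := mul_comm _ _
    refine le_trans (Finset.sum_le_sum step) ?_
    rw [← Finset.sum_mul]
    refine mul_le_mul_of_nonneg_right ?_ (pow_nonneg (abs_nonneg _) _)
    rw [hK₂]
    exact Finset.sum_le_sum_of_subset_of_nonneg (Finset.filter_subset _ _)
      (fun p _ _ => norm_nonneg _)
  calc ‖A ρ * P - P * Q‖ = ‖(A ρ - S) * P + (S * P - P * Q)‖ := by rw [hsplit2]
    _ ≤ ‖(A ρ - S) * P‖ + ‖S * P - P * Q‖ := norm_add_le _ _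
    _ ≤ ‖A ρ - S‖ * ‖P‖ + K₂ * |ρ| ^ N := add_le_add (norm_mul_le _ _) hterm2norm
    _ ≤ (C * |ρ| ^ N) * K₁ + K₂ * |ρ| ^ N := by
        refine add_le_add_left (mul_le_mul (hbound ρ hρε) hPnorm (norm_nonneg _) ?_) _
        positivity
    _ = (C * K₁ + K₂) * (|ρ| ^ N) := by ring
    _ = (C * K₁ + K₂) * ‖|ρ| ^ N‖ := by
        rw [Real.norm_eq_abs, abs_of_nonneg (a := |ρ| ^ N) (pow_nonneg (abs_nonneg _) _)]
end
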